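/- arXiv:1605.05458 — 4 statements merged into one kernel-verified Lean document; each statement's English description precedes it below -/
import Mathlib

section
/- Let R be a semisimple ring and C = ⊕_{n∈ℕ} C_n a connected R-coring. Then C is strongly graded (i.e. all the components Δ_{p,q} : C_{p+q} → C_p ⊗_R C_q of the comultiplication are injective) if and only if the set P(C) of primitive elements of C equals the homogeneous component C_1. -/
noncomputable section
open MulOpposite
open scoped DirectSum

namespace P1605

--CHUNK_T_BEGIN

section TensorR

variable (R : Type) [Ring R]
variable (M N : Type) [AddCommGroup M] [AddCommGroup N] [Module Rᵐᵒᵖ M] [Module R N]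

/-- The subgroup of the `ℤ`-tensor product by which one quotients to obtain the
balanced tensor product `M ⊗_R N` of a right `R`-module and a left `R`-module. -/
def trel : Submodule ℤ (TensorProduct ℤ M N) :=
  Submodule.span ℤ {x | ∃ (r : R) (m : M) (n : N),
    x = (op r • m) ⊗ₜ[ℤ] n - m ⊗ₜ[ℤ] (r • n)}

/-- The tensor product `M ⊗_R N` over a (possibly noncommutative) ring `R`,
of a right `R`-module `M` and a left `R`-module `N`. -/
def TensorR : Type := TensorProduct ℤ M N ⧸ trel R M N

instance : AddCommGroup (TensorR R M N) :=
  inferInstanceAs (AddCommGroup (TensorProduct ℤ M N ⧸ trel R M N))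

variable {R M N}

/-- The canonical balanced biadditive map `M × N → M ⊗_R N`, `(m, n) ↦ m ⊗ n`. -/
def tp (m : M) (n : N) : TensorR R M N := Submodule.Quotient.mk (m ⊗ₜ[ℤ] n)

theorem tp_add_left (m m' : M) (n : N) :
    tp (R := R) (m + m') n = tp m n + tp m' n := by
  show Submodule.Quotient.mk _ = _
  rw [TensorProduct.add_tmul]; exact Submodule.Quotient.mk_add ..

theorem tp_add_right (m : M) (n n' : N) :
    tp (R := R) m (n + n') = tp m n + tp m n' := by
  show Submodule.Quotient.mk _ = _
  rw [TensorProduct.tmul_add]; exact Submodule.Quotient.mk_add ..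

@[simp] theorem tp_zero_left (n : N) : tp (R := R) (0 : M) n = 0 := by
  show Submodule.Quotient.mk _ = _
  rw [TensorProduct.zero_tmul]; exact Submodule.Quotient.mk_eq_zero _ |>.2 (zero_mem _)

@[simp] theorem tp_zero_right (m : M) : tp (R := R) m (0 : N) = 0 := by
  show Submodule.Quotient.mk _ = _
  rw [TensorProduct.tmul_zero]; exact Submodule.Quotient.mk_eq_zero _ |>.2 (zero_mem _)

/-- The balance relation `(m · r) ⊗ n = m ⊗ (r · n)`. -/
theorem tp_balance (r : R) (m : M) (n : N) :
    tp (R := R) (op r • m) n = tp m (r • n) :=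
  (Submodule.Quotient.eq _).2 (Submodule.subset_span ⟨r, m, n, rfl⟩)

theorem tp_neg_left (m : M) (n : N) : tp (R := R) (-m) n = - tp m n := by
  have := tp_add_left (R := R) m (-m) n
  rw [add_neg_cancel, tp_zero_left] at this
  exact eq_neg_of_add_eq_zero_right this.symm

end TensorR

section TensorR

variable {R : Type} [Ring R]
variable {M N : Type} [AddCommGroup M] [AddCommGroup N] [Module Rᵐᵒᵖ M] [Module R N]
variable {P : Type} [AddCommGroup P]

/-- Universal property: a balanced biadditive map lifts to the tensor product. -/
def liftT (f : M →+ N →+ P)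
    (hf : ∀ (r : R) (m : M) (n : N), f (op r • m) n = f m (r • n)) :
    TensorR R M N →+ P :=
  ((trel R M N).liftQ
    (TensorProduct.lift (LinearMap.mk₂ ℤ (fun m n => f m n)
      (fun m m' n => by simp)
      (fun z m n => by simp)
      (fun m n n' => by simp)
      (fun z m n => by simp)))
    (by
      rw [trel, Submodule.span_le]
      rintro x ⟨r, m, n, rfl⟩
      erw [LinearMap.mem_ker, map_sub, TensorProduct.lift.tmul, TensorProduct.lift.tmul]
      simp [hf r m n])).toAddMonoidHom

@[simp] theorem liftT_tp (f : M →+ N →+ P)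
    (hf : ∀ (r : R) (m : M) (n : N), f (op r • m) n = f m (r • n)) (m : M) (n : N) :
    liftT f hf (tp m n) = f m n := rfl

theorem TensorR.ind {motive : TensorR R M N → Prop} (z : TensorR R M N)
    (h0 : motive 0) (htp : ∀ m n, motive (tp m n))
    (hadd : ∀ x y, motive x → motive y → motive (x + y)) : motive z := by
  obtain ⟨w, rfl⟩ := Submodule.Quotient.mk_surjective _ z
  induction w using TensorProduct.induction_on with
  | zero =>
      have : (Submodule.Quotient.mk (0 : TensorProduct ℤ M N) : TensorR R M N) = 0 :=
        (Submodule.Quotient.mk_eq_zero _).2 (zero_mem _)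
      rw [this]; exact h0
  | tmul m n => exact htp m n
  | add x y hx hy =>
      rw [Submodule.Quotient.mk_add]
      exact hadd _ _ hx hy

theorem TensorR.addHom_ext {f g : TensorR R M N →+ P}
    (h : ∀ m n, f (tp m n) = g (tp m n)) : f = g := by
  ext z
  induction z using TensorR.ind with
  | h0 => simp
  | htp m n => exact h m n
  | hadd x y hx hy => simp [hx, hy]

variable {M' N' : Type} [AddCommGroup M'] [AddCommGroup N'] [Module Rᵐᵒᵖ M'] [Module R N']

/-- Functoriality of the tensor product in both arguments, for equivariant additive maps. -/
def mapT (f : M →+ M') (g : N →+ N')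
    (hf : ∀ (r : R) (m : M), f (op r • m) = op r • f m)
    (hg : ∀ (r : R) (n : N), g (r • n) = r • g n) :
    TensorR R M N →+ TensorR R M' N' :=
  liftT (P := TensorR R M' N')
    (AddMonoidHom.mk' (fun m => AddMonoidHom.mk' (fun n => tp (R := R) (f m) (g n))
        (fun n n' => by (try dsimp only); rw [map_add, tp_add_right]))
      (fun m m' => by
        ext n
        show tp (R := R) (f (m + m')) (g n) = tp (f m) (g n) + tp (f m') (g n)
        rw [map_add, tp_add_left]))
    (fun r m n => by
      show tp (f (op r • m)) (g n) = tp (f m) (g (r • n))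
      rw [hf, hg]; exact tp_balance r (f m) (g n))

@[simp] theorem mapT_tp (f : M →+ M') (g : N →+ N')
    (hf : ∀ (r : R) (m : M), f (op r • m) = op r • f m)
    (hg : ∀ (r : R) (n : N), g (r • n) = r • g n) (m : M) (n : N) :
    mapT f g hf hg (tp m n) = tp (f m) (g n) := rfl

/-- A convenient unbundled version of the universal property. -/
def liftT₂ (f : M → N → P)
    (h1 : ∀ m m' n, f (m + m') n = f m n + f m' n)
    (h2 : ∀ m n n', f m (n + n') = f m n + f m n')
    (hb : ∀ (r : R) m n, f (op r • m) n = f m (r • n)) : TensorR R M N →+ P :=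
  liftT (AddMonoidHom.mk' (fun m => AddMonoidHom.mk' (f m) (h2 m))
    (fun m m' => AddMonoidHom.ext fun n => h1 m m' n)) hb

@[simp] theorem liftT₂_tp (f : M → N → P) (h1 : ∀ m m' n, f (m + m') n = f m n + f m' n)
    (h2 : ∀ m n n', f m (n + n') = f m n + f m n')
    (hb : ∀ (r : R) m n, f (op r • m) n = f m (r • n)) (m : M) (n : N) :
    liftT₂ f h1 h2 hb (tp m n) = f m n := rfl

end TensorR

section Modules

variable {R : Type} [Ring R]
variable {M N : Type} [AddCommGroup M] [AddCommGroup N] [Module Rᵐᵒᵖ M] [Module R N]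

section Left
variable [Module R M] [SMulCommClass R Rᵐᵒᵖ M]

/-- Left `R`-action on the tensor product, through the left factor. -/
def lsmT (r : R) : TensorR R M N →+ TensorR R M N :=
  mapT (DistribMulAction.toAddMonoidHom M r) (AddMonoidHom.id N)
    (fun s m => smul_comm r (op s) m) (fun _ _ => rfl)

instance instModLeftTensorR : Module R (TensorR R M N) where
  smul r z := lsmT r z
  one_smul z := by
    show lsmT 1 z = z
    induction z using TensorR.ind with
    | h0 => simp
    | htp m n => show tp ((1:R) • m) n = tp m n; rw [one_smul]
    | hadd x y hx hy => rw [map_add, hx, hy]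
  mul_smul r s z := by
    show lsmT (r * s) z = lsmT r (lsmT s z)
    induction z using TensorR.ind with
    | h0 => simp
    | htp m n => show tp ((r * s) • m) n = tp (r • s • m) n; rw [mul_smul]
    | hadd x y hx hy => simp only [map_add, hx, hy]
  smul_zero r := by show lsmT r 0 = 0; simp
  smul_add r x y := by show lsmT r (x + y) = lsmT r x + lsmT r y; simp
  add_smul r s z := by
    show lsmT (r + s) z = lsmT r z + lsmT s z
    induction z using TensorR.ind with
    | h0 => simp
    | htp m n =>
        show tp ((r + s) • m) n = tp (r • m) n + tp (s • m) n
        rw [add_smul, tp_add_left]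
    | hadd x y hx hy =>
        rw [map_add, hx, hy, map_add, map_add]; abel
  zero_smul z := by
    show lsmT 0 z = 0
    induction z using TensorR.ind with
    | h0 => simp
    | htp m n => show tp ((0:R) • m) n = 0; rw [zero_smul, tp_zero_left]
    | hadd x y hx hy => rw [map_add, hx, hy, add_zero]

@[simp] theorem lsm_tp (r : R) (m : M) (n : N) :
    r • (tp (R := R) m n : TensorR R M N) = tp (r • m) n := rfl

end Left

section Right
variable [Module Rᵐᵒᵖ N] [SMulCommClass R Rᵐᵒᵖ N]

/-- Right `R`-action on the tensor product, through the right factor. -/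
def rsmT (s : Rᵐᵒᵖ) : TensorR R M N →+ TensorR R M N :=
  mapT (AddMonoidHom.id M) (DistribMulAction.toAddMonoidHom N s)
    (fun _ _ => rfl) (fun r n => (smul_comm r s n).symm)

instance instModRightTensorR : Module Rᵐᵒᵖ (TensorR R M N) where
  smul s z := rsmT s z
  one_smul z := by
    show rsmT 1 z = z
    induction z using TensorR.ind with
    | h0 => simp
    | htp m n => show tp m ((1:Rᵐᵒᵖ) • n) = tp m n; rw [one_smul]
    | hadd x y hx hy => rw [map_add, hx, hy]
  mul_smul r s z := by
    show rsmT (r * s) z = rsmT r (rsmT s z)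
    induction z using TensorR.ind with
    | h0 => simp
    | htp m n => show tp m ((r * s) • n) = tp m (r • s • n); rw [mul_smul]
    | hadd x y hx hy => simp only [map_add, hx, hy]
  smul_zero r := by show rsmT r 0 = 0; simp
  smul_add r x y := by show rsmT r (x + y) = rsmT r x + rsmT r y; simp
  add_smul r s z := by
    show rsmT (r + s) z = rsmT r z + rsmT s z
    induction z using TensorR.ind with
    | h0 => simp
    | htp m n =>
        show tp m ((r + s) • n) = tp m (r • n) + tp m (s • n)
        rw [add_smul, tp_add_right]
    | hadd x y hx hy => rw [map_add, hx, hy, map_add, map_add]; abel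
  zero_smul z := by
    show rsmT 0 z = 0
    induction z using TensorR.ind with
    | h0 => simp
    | htp m n => show tp m ((0:Rᵐᵒᵖ) • n) = 0; rw [zero_smul, tp_zero_right]
    | hadd x y hx hy => rw [map_add, hx, hy, add_zero]

@[simp] theorem rsm_tp (s : Rᵐᵒᵖ) (m : M) (n : N) :
    s • (tp (R := R) m n : TensorR R M N) = tp m (s • n) := rfl

end Right

instance instSMulCommTensorR [Module R M] [SMulCommClass R Rᵐᵒᵖ M]
    [Module Rᵐᵒᵖ N] [SMulCommClass R Rᵐᵒᵖ N] :
    SMulCommClass R Rᵐᵒᵖ (TensorR R M N) where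
  smul_comm r s z := by
    induction z using TensorR.ind with
    | h0 => simp
    | htp m n => rw [rsm_tp, lsm_tp, lsm_tp, rsm_tp]
    | hadd x y hx hy => simp only [smul_add, hx, hy]

end Modules

section Assoc

variable {R : Type} [Ring R]
variable {M N P : Type} [AddCommGroup M] [AddCommGroup N] [AddCommGroup P]
variable [Module Rᵐᵒᵖ M]
variable [Module R N] [Module Rᵐᵒᵖ N] [SMulCommClass R Rᵐᵒᵖ N]
variable [Module R P]

/-- The associator `(M ⊗_R N) ⊗_R P → M ⊗_R (N ⊗_R P)`. -/
def assocT : TensorR R (TensorR R M N) P →+ TensorR R M (TensorR R N P) :=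
  liftT (P := TensorR R M (TensorR R N P))
    (liftT (P := P →+ TensorR R M (TensorR R N P))
      (AddMonoidHom.mk' (fun m => AddMonoidHom.mk'
          (fun n => AddMonoidHom.mk' (fun p => tp (R := R) m (tp (R := R) n p))
            (fun p p' => by (try dsimp only); rw [tp_add_right, tp_add_right]))
          (fun n n' => by
            ext p
            show tp (R := R) m (tp (R := R) (n + n') p) = tp m (tp n p) + tp m (tp n' p)
            rw [tp_add_left, tp_add_right]))
        (fun m m' => by
          ext n p
          show tp (R := R) (m + m') (tp (R := R) n p)
              = tp m (tp n p) + tp m' (tp n p)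
          rw [tp_add_left]))
      (fun r m n => by
        ext p
        show tp (R := R) (op r • m) (tp (R := R) n p) = tp m (tp (r • n) p)
        rw [tp_balance, lsm_tp]))
    (fun r x p => by
      induction x using TensorR.ind with
      | h0 => simp
      | htp m n =>
          rw [rsm_tp]
          show tp (R := R) m (tp (R := R) (op r • n) p) = tp m (tp n (r • p))
          rw [tp_balance]
      | hadd x y hx hy =>
          simp only [smul_add, map_add, AddMonoidHom.add_apply, hx, hy])

@[simp] theorem assocT_tp (m : M) (n : N) (p : P) :
    assocT (R := R) (tp (tp m n) p) = tp m (tp n p) := rfl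

/-- The associator `M ⊗_R (N ⊗_R P) → (M ⊗_R N) ⊗_R P`. -/
def assocT' : TensorR R M (TensorR R N P) →+ TensorR R (TensorR R M N) P :=
  liftT (P := TensorR R (TensorR R M N) P)
    (AddMonoidHom.mk'
      (fun m => liftT (P := TensorR R (TensorR R M N) P)
        (AddMonoidHom.mk' (fun n => AddMonoidHom.mk'
            (fun p => tp (R := R) (tp (R := R) m n) p)
            (fun p p' => by (try dsimp only); rw [tp_add_right]))
          (fun n n' => by
            ext p
            show tp (R := R) (tp (R := R) m (n + n')) p
                = tp (tp m n) p + tp (tp m n') p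
            rw [tp_add_right, tp_add_left]))
        (fun r n p => by
          show tp (R := R) (tp (R := R) m (op r • n)) p = tp (tp m n) (r • p)
          rw [show tp (R := R) m (op r • n) = op r • tp (R := R) m n from
            (rsm_tp _ _ _).symm, tp_balance]))
      (fun m m' => by
        apply TensorR.addHom_ext (R := R)
        intro n p
        show tp (R := R) (tp (R := R) (m + m') n) p
            = tp (tp m n) p + tp (tp m' n) p
        rw [tp_add_left, tp_add_left]))
    (fun r m w => by
      induction w using TensorR.ind with
      | h0 => simp
      | htp n p =>
          show tp (R := R) (tp (R := R) (op r • m) n) p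
              = tp (R := R) (tp (R := R) m (r • n)) p
          rw [tp_balance (R := R) r m n]
      | hadd x y hx hy => rw [smul_add, map_add, hx, hy, map_add])

@[simp] theorem assocT'_tp (m : M) (n : N) (p : P) :
    assocT' (R := R) (tp m (tp n p)) = tp (tp m n) p := rfl

end Assoc

/-- Transport of an additive group along an equality of indices in a family. -/
def fcast {α : Sort*} (F : α → Type) [∀ x, AddCommGroup (F x)] {a b : α} (h : a = b) :
    F a ≃+ F b := by subst h; exact AddEquiv.refl _

@[simp] theorem fcast_rfl {α : Sort*} (F : α → Type) [∀ x, AddCommGroup (F x)] (a : α)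
    (x : F a) : fcast F (rfl : a = a) x = x := rfl

--CHUNK_T_END

--CHUNK_C_BEGIN
section Corings

variable {R : Type} [Ring R]

section Collapse

variable {M C0 : Type} [AddCommGroup M] [AddCommGroup C0]

/-- Collapsing `M ⊗_R C_0 → M` along an identification `ε : C_0 ≅ R`. -/
def rcollapse [Module Rᵐᵒᵖ M] [Module R C0] (e : C0 →+ R)
    (he : ∀ (r : R) (y : C0), e (r • y) = r * e y) : TensorR R M C0 →+ M :=
  liftT₂ (fun m y => (op (e y) : Rᵐᵒᵖ) • m)
    (fun m m' y => smul_add _ m m')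
    (fun m y y' => by (try dsimp only); rw [map_add, ← add_smul, op_add])
    (fun r m y => by
      try dsimp only
      rw [← mul_smul, he, ← op_mul])

/-- Collapsing `C_0 ⊗_R M → M` along an identification `ε : C_0 ≅ R`. -/
def lcollapse [Module R M] [Module Rᵐᵒᵖ C0] (e : C0 →+ R)
    (he : ∀ (s : Rᵐᵒᵖ) (y : C0), e (s • y) = e y * s.unop) : TensorR R C0 M →+ M :=
  liftT₂ (fun y m => e y • m)
    (fun y y' m => by (try dsimp only); rw [map_add, ← add_smul])
    (fun y m m' => smul_add _ m m')
    (fun r y m => by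
      try dsimp only
      rw [he, ← mul_smul, unop_op])

end Collapse

variable (R)

/-- A connected graded `R`-coring: a positively graded coalgebra in the monoidal
category of `R`-bimodules whose degree-zero component is `R` itself (via the
counit isomorphism `ε`). -/
structure ConnCoring where
  C : ℕ → Type
  [acg : ∀ n, AddCommGroup (C n)]
  [modL : ∀ n, Module R (C n)]
  [modR : ∀ n, Module Rᵐᵒᵖ (C n)]
  [scomm : ∀ n, SMulCommClass R Rᵐᵒᵖ (C n)]
  Δ : ∀ p q, C (p + q) →+ TensorR R (C p) (C q)
  Δ_lsmul : ∀ (p q : ℕ) (r : R) (x : C (p + q)), Δ p q (r • x) = r • Δ p q x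
  Δ_rsmul : ∀ (p q : ℕ) (s : Rᵐᵒᵖ) (x : C (p + q)), Δ p q (s • x) = s • Δ p q x
  ε : C 0 ≃+ R
  ε_lsmul : ∀ (r : R) (x : C 0), ε (r • x) = r * ε x
  ε_rsmul : ∀ (s : Rᵐᵒᵖ) (x : C 0), ε (s • x) = ε x * s.unop
  counit_right : ∀ (n : ℕ) (x : C (n + 0)),
    rcollapse ε.toAddMonoidHom ε_lsmul (Δ n 0 x) = x
  counit_left : ∀ (n : ℕ) (x : C (0 + n)),
    lcollapse ε.toAddMonoidHom ε_rsmul (Δ 0 n x) = fcast C (Nat.zero_add n) x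
  grouplike : Δ 0 0 (ε.symm 1) = tp (ε.symm 1) (ε.symm 1)
  coassoc : ∀ (p q r : ℕ) (x : C (p + q + r)),
    assocT (mapT (Δ p q) (AddMonoidHom.id (C r))
        (fun s y => Δ_rsmul p q (op s) y) (fun _ _ => rfl)
      (Δ (p + q) r x))
    = mapT (AddMonoidHom.id (C p)) (Δ q r) (fun _ _ => rfl)
        (fun s y => Δ_lsmul q r s y)
      (Δ p (q + r) (fcast C (Nat.add_assoc p q r) x))

attribute [instance] ConnCoring.acg ConnCoring.modL ConnCoring.modR ConnCoring.scomm

variable {R}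

/-- A connected coring is strongly graded when all components of the
comultiplication are injective. -/
def ConnCoring.StronglyGraded (C : ConnCoring R) : Prop :=
  ∀ p q, Function.Injective (C.Δ p q)

/-- The element `1 ∈ R = C_0` of a connected coring. -/
def ConnCoring.one (C : ConnCoring R) : C.C 0 := C.ε.symm 1

/-- An element `x = ∑ₖ xₖ` of a connected coring (given by its homogeneous
components) is primitive if `Δ x = x ⊗ 1 + 1 ⊗ x`, written out componentwise. -/
def ConnCoring.IsPrimitive (C : ConnCoring R) (x : ⨁ n, C.C n) : Prop :=
  (C.Δ 0 0 (x 0) = tp (x 0) C.one + tp C.one (x 0)) ∧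
  (∀ k : ℕ, 0 < k → C.Δ k 0 (x (k + 0)) = tp (x k) C.one) ∧
  (∀ k : ℕ, 0 < k → C.Δ 0 k (x (0 + k)) = tp C.one (x k)) ∧
  (∀ p q : ℕ, 0 < p → 0 < q → C.Δ p q (x (p + q)) = 0)

/-- A morphism of connected graded `R`-corings. -/
structure CoringMor (C D : ConnCoring R) where
  f : ∀ n, C.C n →+ D.C n
  f_lsmul : ∀ (n : ℕ) (r : R) (x : C.C n), f n (r • x) = r • f n x
  f_rsmul : ∀ (n : ℕ) (s : Rᵐᵒᵖ) (x : C.C n), f n (s • x) = s • f n x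
  f_counit : ∀ x : C.C 0, D.ε (f 0 x) = C.ε x
  f_comul : ∀ (p q : ℕ) (x : C.C (p + q)),
    D.Δ p q (f (p + q) x)
      = mapT (f p) (f q) (fun s y => f_rsmul p (op s) y) (fun s y => f_lsmul q s y)
          (C.Δ p q x)

end Corings
--CHUNK_C_END

/- ===================== Auxiliary lemmas ===================== -/

section FcastLemmas

variable {α : Sort*} (F : α → Type) [∀ x, AddCommGroup (F x)]

theorem fcast_self {a : α} (h : a = a) (x : F a) : fcast F h x = x := rfl

theorem fcast_fcast_cancel {a b : α} (h1 : a = b) (h2 : b = a) (x : F a) :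
    fcast F h2 (fcast F h1 x) = x := by subst h1; rfl

end FcastLemmas

theorem fcast_dfinsupp_apply {F : ℕ → Type} [∀ n, AddCommGroup (F n)]
    (x : ⨁ n, F n) {a b : ℕ} (h : a = b) : fcast F h (x a) = x b := by subst h; rfl

theorem of_apply_fcast {F : ℕ → Type} [∀ n, AddCommGroup (F n)] {i j : ℕ}
    (h : i = j) (c : F i) : (DirectSum.of F i c) j = fcast F h c := by
  subst h; rw [DirectSum.of_eq_same]; rfl

section Assoc2

variable {R : Type} [Ring R]
variable {M N P : Type} [AddCommGroup M] [AddCommGroup N] [AddCommGroup P]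
variable [Module Rᵐᵒᵖ M]
variable [Module R N] [Module Rᵐᵒᵖ N] [SMulCommClass R Rᵐᵒᵖ N]
variable [Module R P]

theorem assocT'_assocT (z : TensorR R (TensorR R M N) P) :
    assocT' (assocT z) = z := by
  induction z using TensorR.ind with
  | h0 => simp
  | htp w p =>
      induction w using TensorR.ind with
      | h0 => rw [tp_zero_left]; simp
      | htp m n => rfl
      | hadd x y hx hy => rw [tp_add_left, map_add, map_add, hx, hy]
  | hadd x y hx hy => rw [map_add, map_add, hx, hy]

end Assoc2

section Semisimple

/-- Over a semisimple ring, every surjection from the free module splits. -/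
theorem exists_linear_section {R N : Type} [Ring R] [AddCommGroup N] [Module R N]
    (hR : IsSemisimpleRing R) :
    ∃ σ : N →ₗ[R] (N →₀ R), ∀ x, Finsupp.linearCombination R (id : N → N) (σ x) = x := by
  haveI := hR
  set π := Finsupp.linearCombination R (id : N → N) with hπ
  obtain ⟨Q, hQ⟩ := exists_isCompl (LinearMap.ker π)
  have hbij : Function.Bijective (π ∘ₗ Q.subtype) := by
    constructor
    · intro a b hab
      have hmem : (a : N →₀ R) - b ∈ LinearMap.ker π ⊓ Q := by
        rw [Submodule.mem_inf]
        refine ⟨?_, sub_mem a.2 b.2⟩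
        rw [LinearMap.mem_ker, map_sub, sub_eq_zero]
        exact hab
      rw [hQ.inf_eq_bot, Submodule.mem_bot] at hmem
      exact Subtype.ext (sub_eq_zero.mp hmem)
    · intro x
      obtain ⟨w, hw⟩ := Finsupp.linearCombination_id_surjective R N x
      have hww : w ∈ LinearMap.ker π ⊔ Q := by rw [hQ.sup_eq_top]; trivial
      obtain ⟨u, hu, v, hv, huv⟩ := Submodule.mem_sup.mp hww
      refine ⟨⟨v, hv⟩, ?_⟩
      have hπw : π w = x := hw
      rw [← huv, map_add] at hπw
      rw [LinearMap.mem_ker] at hu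
      show π v = x
      rw [← hπw, hu, zero_add]
  let e := LinearEquiv.ofBijective (π ∘ₗ Q.subtype) hbij
  refine ⟨Q.subtype ∘ₗ e.symm.toLinearMap, fun x => ?_⟩
  show π (Q.subtype (e.symm x)) = x
  exact e.apply_symm_apply x

/-- Over a semisimple ring, an injective left-linear map splits. -/
theorem exists_linear_retraction {R N N' : Type} [Ring R] [AddCommGroup N] [AddCommGroup N']
    [Module R N] [Module R N'] (hR : IsSemisimpleRing R) (g : N →ₗ[R] N')
    (hinj : Function.Injective g) : ∃ h : N' →ₗ[R] N, ∀ x, h (g x) = x := by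
  haveI := hR
  obtain ⟨Q, hQ⟩ := exists_isCompl (LinearMap.range g)
  let e : N ≃ₗ[R] LinearMap.range g := LinearEquiv.ofInjective g hinj
  refine ⟨e.symm.toLinearMap ∘ₗ (LinearMap.range g).linearProjOfIsCompl Q hQ, fun x => ?_⟩
  have h1 : (LinearMap.range g).linearProjOfIsCompl Q hQ (g x)
      = ⟨g x, LinearMap.mem_range_self g x⟩ :=
    Submodule.linearProjOfIsCompl_apply_left hQ ⟨g x, LinearMap.mem_range_self g x⟩
  show e.symm ((LinearMap.range g).linearProjOfIsCompl Q hQ (g x)) = x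
  rw [h1]
  have h2 : (⟨g x, LinearMap.mem_range_self g x⟩ : LinearMap.range g) = e x := by
    apply Subtype.ext
    simp [e, LinearEquiv.ofInjective_apply]
  rw [h2, LinearEquiv.symm_apply_apply]

end Semisimple

section LeftInj

variable {R M N N' : Type} [Ring R] [AddCommGroup M] [AddCommGroup N] [AddCommGroup N']
variable [Module Rᵐᵒᵖ M] [Module R N] [Module R N']

/-- Over a semisimple ring, tensoring on the left preserves injectivity. -/
theorem mapT_left_injective (hR : IsSemisimpleRing R)
    (g : N →+ N') (hg : ∀ (r : R) (n : N), g (r • n) = r • g n)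
    (hinj : Function.Injective g) {z z' : TensorR R M N}
    (h : mapT (AddMonoidHom.id M) g (fun _ _ => rfl) hg z
      = mapT (AddMonoidHom.id M) g (fun _ _ => rfl) hg z') :
    z = z' := by
  let gl : N →ₗ[R] N' := ⟨⟨g, g.map_add⟩, hg⟩
  obtain ⟨ret, hret⟩ := exists_linear_retraction hR gl hinj
  have hcomp : ∀ w : TensorR R M N,
      mapT (AddMonoidHom.id M) ret.toAddMonoidHom (fun _ _ => rfl)
        (fun r x => ret.map_smul r x)
        (mapT (AddMonoidHom.id M) g (fun _ _ => rfl) hg w) = w := by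
    intro w
    induction w using TensorR.ind with
    | h0 => simp
    | htp m x =>
        show tp m (ret (g x)) = tp m x
        rw [show ret (g x) = x from hret x]
    | hadd a b ha hb => rw [map_add, map_add, ha, hb]
  have := congrArg (mapT (AddMonoidHom.id M) ret.toAddMonoidHom (fun _ _ => rfl)
    (fun r x => ret.map_smul r x)) h
  rwa [hcomp, hcomp] at this

end LeftInj

section RightInj

variable {R M M' : Type} [Ring R] [AddCommGroup M] [AddCommGroup M']
variable [Module Rᵐᵒᵖ M] [Module Rᵐᵒᵖ M'] {ι : Type}

/-- Collapsing `M ⊗_R (ι →₀ R)` to `ι →₀ M`. -/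
def finsuppCollapse : TensorR R M (ι →₀ R) →+ (ι →₀ M) :=
  liftT₂ (fun m φ => Finsupp.mapRange (fun r => (op r : Rᵐᵒᵖ) • m) (by simp) φ)
    (fun m m' φ => by
      ext i
      simp [Finsupp.mapRange_apply, smul_add])
    (fun m φ φ' => by
      ext i
      simp [Finsupp.mapRange_apply, op_add, add_smul])
    (fun r m φ => by
      ext i
      simp only [Finsupp.mapRange_apply, Finsupp.smul_apply, smul_eq_mul, smul_smul,
        ← MulOpposite.op_mul])

/-- Expanding `ι →₀ M` into `M ⊗_R (ι →₀ R)`. -/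
def finsuppExpand : (ι →₀ M) →+ TensorR R M (ι →₀ R) :=
  Finsupp.liftAddHom fun i => AddMonoidHom.mk' (fun m => tp m (Finsupp.single i 1))
    (fun m m' => tp_add_left m m' _)

theorem finsuppExpand_single (i : ι) (mm : M) :
    finsuppExpand (R := R) (Finsupp.single i mm) = tp mm (Finsupp.single i (1 : R)) :=
  Finsupp.liftAddHom_apply_single _ i mm

theorem finsuppExpand_collapse (z : TensorR R M (ι →₀ R)) :
    finsuppExpand (finsuppCollapse z) = z := by
  induction z using TensorR.ind with
  | h0 => simp
  | htp m φ =>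
      induction φ using Finsupp.induction with
      | zero => rw [tp_zero_right, map_zero, map_zero]
      | single_add a b f haf hb ih =>
          rw [tp_add_right, map_add, map_add, ih]
          have h1 : finsuppCollapse (R := R) (tp m (Finsupp.single a b))
              = Finsupp.single a ((op b : Rᵐᵒᵖ) • m) := by
            show Finsupp.mapRange (fun r => (op r : Rᵐᵒᵖ) • m) (by simp) (Finsupp.single a b)
              = Finsupp.single a ((op b : Rᵐᵒᵖ) • m)
            rw [Finsupp.mapRange_single]
          rw [h1, finsuppExpand_single, tp_balance]
          congr 2
          rw [Finsupp.smul_single, smul_eq_mul, mul_one]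
  | hadd x y hx hy => rw [map_add, map_add, hx, hy]

theorem finsuppCollapse_mapT (f : M →+ M')
    (hf : ∀ (r : R) (m : M), f ((op r : Rᵐᵒᵖ) • m) = (op r : Rᵐᵒᵖ) • f m)
    (z : TensorR R M (ι →₀ R)) :
    finsuppCollapse (mapT f (AddMonoidHom.id (ι →₀ R)) hf (fun _ _ => rfl) z)
      = Finsupp.mapRange f f.map_zero (finsuppCollapse z) := by
  induction z using TensorR.ind with
  | h0 => simp
  | htp m φ =>
      show Finsupp.mapRange (fun r => (op r : Rᵐᵒᵖ) • f m) (by simp) φ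
        = Finsupp.mapRange f f.map_zero (Finsupp.mapRange (fun r => (op r : Rᵐᵒᵖ) • m) (by simp) φ)
      ext i
      simp [Finsupp.mapRange_apply, hf]
  | hadd x y hx hy =>
      rw [map_add, map_add, hx, hy]
      ext i
      simp [Finsupp.mapRange_apply, Finsupp.add_apply]

theorem mapT_free_injective (f : M →+ M')
    (hf : ∀ (r : R) (m : M), f ((op r : Rᵐᵒᵖ) • m) = (op r : Rᵐᵒᵖ) • f m)
    (hinj : Function.Injective f) {z z' : TensorR R M (ι →₀ R)}
    (h : mapT f (AddMonoidHom.id (ι →₀ R)) hf (fun _ _ => rfl) z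
      = mapT f (AddMonoidHom.id (ι →₀ R)) hf (fun _ _ => rfl) z') :
    z = z' := by
  have h2 := congrArg finsuppCollapse h
  rw [finsuppCollapse_mapT, finsuppCollapse_mapT] at h2
  have h3 : finsuppCollapse z = finsuppCollapse z' := by
    ext i
    apply hinj
    have := DFunLike.congr_fun h2 i
    simpa [Finsupp.mapRange_apply] using this
  have h4 := congrArg (finsuppExpand (R := R) (M := M) (ι := ι)) h3
  rwa [finsuppExpand_collapse, finsuppExpand_collapse] at h4

variable {N : Type} [AddCommGroup N] [Module R N]

/-- Over a semisimple ring, tensoring on the right preserves injectivity. -/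
theorem mapT_right_injective (hR : IsSemisimpleRing R)
    (f : M →+ M')
    (hf : ∀ (r : R) (m : M), f ((op r : Rᵐᵒᵖ) • m) = (op r : Rᵐᵒᵖ) • f m)
    (hinj : Function.Injective f) {z z' : TensorR R M N}
    (h : mapT f (AddMonoidHom.id N) hf (fun _ _ => rfl) z
      = mapT f (AddMonoidHom.id N) hf (fun _ _ => rfl) z') :
    z = z' := by
  obtain ⟨σ, hσ⟩ := exists_linear_section (N := N) hR
  have hcancel : ∀ w : TensorR R M N,
      mapT (AddMonoidHom.id M)
        (Finsupp.linearCombination R (id : N → N)).toAddMonoidHom (fun _ _ => rfl)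
        (fun r x => (Finsupp.linearCombination R (id : N → N)).map_smul r x)
        (mapT (AddMonoidHom.id M) σ.toAddMonoidHom (fun _ _ => rfl)
          (fun r x => σ.map_smul r x) w) = w := by
    intro w
    induction w using TensorR.ind with
    | h0 => simp
    | htp m x =>
        show tp m (Finsupp.linearCombination R (id : N → N) (σ x)) = tp m x
        rw [hσ]
    | hadd a b ha hb => rw [map_add, map_add, ha, hb]
  have h1 : mapT f (AddMonoidHom.id (N →₀ R)) hf (fun _ _ => rfl)
      (mapT (AddMonoidHom.id M) σ.toAddMonoidHom (fun _ _ => rfl)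
        (fun r x => σ.map_smul r x) z)
      = mapT f (AddMonoidHom.id (N →₀ R)) hf (fun _ _ => rfl)
        (mapT (AddMonoidHom.id M) σ.toAddMonoidHom (fun _ _ => rfl)
          (fun r x => σ.map_smul r x) z') := by
    have hswap : ∀ w : TensorR R M N,
        mapT f (AddMonoidHom.id (N →₀ R)) hf (fun _ _ => rfl)
          (mapT (AddMonoidHom.id M) σ.toAddMonoidHom (fun _ _ => rfl)
            (fun r x => σ.map_smul r x) w)
        = mapT (AddMonoidHom.id M') σ.toAddMonoidHom (fun _ _ => rfl)
            (fun r x => σ.map_smul r x)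
          (mapT f (AddMonoidHom.id N) hf (fun _ _ => rfl) w) := by
      intro w
      induction w using TensorR.ind with
      | h0 => simp
      | htp m x => rfl
      | hadd a b ha hb => rw [map_add, map_add, ha, hb, map_add, map_add]
    rw [hswap, hswap, h]
  have h2 := mapT_free_injective f hf hinj h1
  have h3 := congrArg (mapT (AddMonoidHom.id M)
    (Finsupp.linearCombination R (id : N → N)).toAddMonoidHom (fun _ _ => rfl)
    (fun r x => (Finsupp.linearCombination R (id : N → N)).map_smul r x)) h2
  rwa [hcancel, hcancel] at h3

end RightInj

/- ===================== Coring lemmas ===================== -/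

section CoringLemmas

variable {R : Type} [Ring R] (C : ConnCoring R)

theorem rcoll_tp_one {M : Type} [AddCommGroup M] [Module Rᵐᵒᵖ M] (m : M) :
    rcollapse C.ε.toAddMonoidHom C.ε_lsmul (tp m C.one) = m := by
  show (op (C.ε C.one) : Rᵐᵒᵖ) • m = m
  rw [ConnCoring.one, AddEquiv.apply_symm_apply, op_one, one_smul]

theorem lcoll_tp_one {M : Type} [AddCommGroup M] [Module R M] (m : M) :
    lcollapse C.ε.toAddMonoidHom C.ε_rsmul (tp C.one m) = m := by
  show C.ε C.one • m = m
  rw [ConnCoring.one, AddEquiv.apply_symm_apply, one_smul]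

theorem delta_n0 (n : ℕ) (x : C.C n) : C.Δ n 0 x = tp x C.one := by
  have K : ∀ z : TensorR R (C.C n) (C.C 0),
      tp (rcollapse C.ε.toAddMonoidHom C.ε_lsmul z) C.one = z := by
    intro z
    induction z using TensorR.ind with
    | h0 => rw [map_zero, tp_zero_left]
    | htp m y =>
        show tp ((op (C.ε y) : Rᵐᵒᵖ) • m) C.one = tp m y
        rw [tp_balance]
        congr 1
        apply C.ε.injective
        rw [C.ε_lsmul, ConnCoring.one, AddEquiv.apply_symm_apply, mul_one]
    | hadd a b ha hb => rw [map_add, tp_add_left, ha, hb]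
  calc C.Δ n 0 x
      = tp (rcollapse C.ε.toAddMonoidHom C.ε_lsmul (C.Δ n 0 x)) C.one := (K _).symm
    _ = tp x C.one := by rw [C.counit_right n x]

theorem delta_0n (n : ℕ) (x : C.C (0 + n)) :
    C.Δ 0 n x = tp C.one (fcast C.C (Nat.zero_add n) x) := by
  have K : ∀ z : TensorR R (C.C 0) (C.C n),
      tp C.one (lcollapse C.ε.toAddMonoidHom C.ε_rsmul z) = z := by
    intro z
    induction z using TensorR.ind with
    | h0 => rw [map_zero, tp_zero_right]
    | htp y m =>
        show tp C.one (C.ε y • m) = tp y m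
        rw [← tp_balance]
        congr 1
        apply C.ε.injective
        rw [C.ε_rsmul, ConnCoring.one, AddEquiv.apply_symm_apply, unop_op, one_mul]
    | hadd a b ha hb => rw [map_add, tp_add_right, ha, hb]
  calc C.Δ 0 n x
      = tp C.one (lcollapse C.ε.toAddMonoidHom C.ε_rsmul (C.Δ 0 n x)) := (K _).symm
    _ = _ := by rw [C.counit_left n x]

/-- Characterization of primitivity in a connected coring. -/
theorem isPrimitive_iff (x : ⨁ n, C.C n) :
    C.IsPrimitive x ↔ (x 0 = 0 ∧ ∀ p q : ℕ, 0 < p → 0 < q → C.Δ p q (x (p + q)) = 0) := by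
  constructor
  · rintro ⟨h1, _, _, h4⟩
    refine ⟨?_, h4⟩
    rw [delta_n0] at h1
    have h2 : tp C.one (x 0) = 0 := left_eq_add.mp h1
    have h3 := congrArg (lcollapse C.ε.toAddMonoidHom C.ε_rsmul) h2
    rwa [lcoll_tp_one, map_zero] at h3
  · rintro ⟨hx0, hpq⟩
    refine ⟨?_, fun k _ => delta_n0 C k (x (k + 0)), fun k _ => ?_, hpq⟩
    · rw [hx0]
      simp
    · exact (delta_0n C k (x (0 + k))).trans
        (congrArg (tp C.one) (fcast_dfinsupp_apply x (Nat.zero_add k)))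

theorem delta_n0_injective (n : ℕ) : Function.Injective ⇑(C.Δ n 0) := by
  intro a b hab
  rw [delta_n0, delta_n0] at hab
  have := congrArg (rcollapse C.ε.toAddMonoidHom C.ε_lsmul) hab
  rwa [rcoll_tp_one, rcoll_tp_one] at this

theorem delta_0n_injective (n : ℕ) : Function.Injective ⇑(C.Δ 0 n) := by
  intro a b hab
  rw [delta_0n, delta_0n] at hab
  have := congrArg (lcollapse C.ε.toAddMonoidHom C.ε_rsmul) hab
  rw [lcoll_tp_one, lcoll_tp_one] at this
  exact (fcast C.C (Nat.zero_add n)).injective this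

end CoringLemmas

/-- Let `R` be a semisimple ring and `C` a connected `R`-coring.
Then `C` is strongly graded (all components `Δ_{p,q} : C_{p+q} → C_p ⊗_R C_q` of
the comultiplication are injective) if and only if the set of primitive elements
of `C` coincides with the homogeneous component `C_1`. -/
theorem strongly_graded_iff_primitives
    (R : Type) [Ring R] (hR : IsSemisimpleRing R) (C : ConnCoring R) :
    C.StronglyGraded ↔
      (∀ x : ⨁ n, C.C n, C.IsPrimitive x ↔ ∀ n : ℕ, n ≠ 1 → x n = 0) := by
  constructor
  · -- strongly graded → primitives are exactly degree-1 elements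
    intro SG x
    rw [isPrimitive_iff C x]
    constructor
    · rintro ⟨hx0, hpq⟩ n hn
      rcases n with _ | n
      · exact hx0
      rcases n with _ | n
      · exact absurd rfl hn
      · have h := hpq 1 (n + 1) one_pos (Nat.succ_pos n)
        have hz : x (1 + (n + 1)) = 0 := SG 1 (n + 1) (by rw [map_zero]; exact h)
        have e : 1 + (n + 1) = n + 1 + 1 := by omega
        rw [← fcast_dfinsupp_apply (F := C.C) x e, hz, map_zero]
    · intro hsupp
      refine ⟨hsupp 0 (by omega), fun p q hp hq => ?_⟩
      rw [hsupp (p + q) (by omega), map_zero]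
  · -- primitives are exactly degree-1 elements → strongly graded
    intro H
    have key : ∀ n p q : ℕ, p + q = n → Function.Injective ⇑(C.Δ p q) := by
      intro n
      induction n using Nat.strong_induction_on with
      | _ n IH =>
        intro p q hpq
        rcases Nat.eq_zero_or_pos q with hq0 | hq0
        · subst hq0
          exact delta_n0_injective C p
        rcases Nat.eq_zero_or_pos p with hp0 | hp0
        · subst hp0
          exact delta_0n_injective C q
        -- both positive
        suffices hker : ∀ c : C.C (p + q), C.Δ p q c = 0 → c = 0 by
          intro a b hab
          rw [← sub_eq_zero]
          exact hker _ (by rw [map_sub, hab, sub_self])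
        intro c hc
        have K : ∀ p' q' : ℕ, ∀ hh : p' + q' = p + q, 0 < p' → 0 < q' →
            C.Δ p' q' (fcast C.C hh.symm c) = 0 := by
          intro p' q' hh hp' hq'
          rcases lt_trichotomy p' p with hlt | heq | hgt
          · -- p' < p : use coassociativity (p', s, q) with p = p' + s
            obtain ⟨s, hs1, hs2⟩ : ∃ s, p = p' + s ∧ 0 < s := ⟨p - p', by omega, by omega⟩
            subst hs1
            have hq' : q' = s + q := by omega
            subst hq'
            have hco := C.coassoc p' s q c
            rw [hc, map_zero, map_zero] at hco
            have harg : mapT (AddMonoidHom.id (C.C p')) (C.Δ s q) (fun _ _ => rfl)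
                (fun r y => C.Δ_lsmul s q r y)
                (C.Δ p' (s + q) (fcast C.C hh.symm c))
              = mapT (AddMonoidHom.id (C.C p')) (C.Δ s q) (fun _ _ => rfl)
                (fun r y => C.Δ_lsmul s q r y) 0 := by
              rw [map_zero]
              exact hco.symm
            exact mapT_left_injective hR (C.Δ s q)
              (fun r y => C.Δ_lsmul s q r y)
              (IH (s + q) (by omega) s q rfl) harg
          · -- p' = p
            subst heq
            have hq' : q' = q := by omega
            subst hq'
            exact hc
          · -- p < p' : use coassociativity (p, s, q') with p' = p + s
            obtain ⟨s, hs1, hs2⟩ : ∃ s, p' = p + s ∧ 0 < s := ⟨p' - p, by omega, by omega⟩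
            subst hs1
            have hqq : q = s + q' := by omega
            subst hqq
            have hco := C.coassoc p s q' (fcast C.C hh.symm c)
            rw [fcast_fcast_cancel, hc, map_zero] at hco
            have hz : mapT (C.Δ p s) (AddMonoidHom.id (C.C q'))
                (fun r y => C.Δ_rsmul p s (op r) y) (fun _ _ => rfl)
                (C.Δ (p + s) q' (fcast C.C hh.symm c)) = 0 := by
              have h5 := congrArg assocT' hco
              rwa [assocT'_assocT, map_zero] at h5
            have harg : mapT (C.Δ p s) (AddMonoidHom.id (C.C q'))
                (fun r y => C.Δ_rsmul p s (op r) y) (fun _ _ => rfl)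
                (C.Δ (p + s) q' (fcast C.C hh.symm c))
              = mapT (C.Δ p s) (AddMonoidHom.id (C.C q'))
                (fun r y => C.Δ_rsmul p s (op r) y) (fun _ _ => rfl) 0 := by
              rw [map_zero]
              exact hz
            exact mapT_right_injective hR (C.Δ p s)
              (fun r y => C.Δ_rsmul p s (op r) y)
              (IH (p + s) (by omega) p s rfl) harg
        have hprim : C.IsPrimitive (DirectSum.of (fun k => C.C k) (p + q) c) := by
          rw [isPrimitive_iff]
          constructor
          · rw [DirectSum.of_eq_of_ne _ _ _ (by omega)]
          · intro p' q' hp' hq'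
            by_cases hco : p' + q' = p + q
            · rw [of_apply_fcast hco.symm]
              exact K p' q' hco hp' hq'
            · rw [DirectSum.of_eq_of_ne _ _ _ (by omega), map_zero]
        have hx := (H _).mp hprim (p + q) (by omega)
        rwa [DirectSum.of_eq_same] at hx
    exact fun p q => key (p + q) p q rfl
end P1605
end
end

section
/- Let R and S be semisimple rings, A a connected R-ring and B a connected S-ring. Then the connected R×S-ring A × B is Koszul if and only if both A and B are Koszul. -/
noncomputable section
open MulOpposite
open scoped DirectSum

namespace P1605

--CHUNK_G_BEGIN
section GradedRings

variable (R : Type) [Ring R]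

/-- A connected graded `R`-ring: a ring `A` together with an `ℕ`-grading by additive
subgroups whose degree-zero part is a copy of `R` (via `emb`), with the multiplicative
grading property.  The (unique) augmentation `A → R` is part of the data. -/
structure GRing (A : Type) [Ring A] where
  emb : R →+* A
  aug : A →+* R
  deg : ℕ → AddSubgroup A
  internal : DirectSum.IsInternal deg
  emb_mem : ∀ r : R, emb r ∈ deg 0
  emb_surj : ∀ x ∈ deg 0, ∃ r : R, emb r = x
  emb_inj : Function.Injective emb
  mul_mem : ∀ {p q : ℕ} {x y : A}, x ∈ deg p → y ∈ deg q → x * y ∈ deg (p + q)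
  aug_emb : ∀ r : R, aug (emb r) = r
  aug_deg : ∀ (n : ℕ), ∀ x ∈ deg (n + 1), aug x = 0

variable {R}

/-- A connected graded ring is strongly graded when every multiplication map
`A_p ⊗ A_q → A_{p+q}` is surjective, i.e. each element of `A_{p+q}` is a sum of
products of elements of degrees `p` and `q`. -/
def GRing.StronglyGraded {A : Type} [Ring A] (G : GRing R A) : Prop :=
  ∀ p q : ℕ, ∀ z ∈ G.deg (p + q),
    z ∈ AddSubgroup.closure {w : A | ∃ x ∈ G.deg p, ∃ y ∈ G.deg q, w = x * y}

/-- A grading, compatible with a graded ring `G`, on an `A`-module `M`. -/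
structure GMod {A : Type} [Ring A] (G : GRing R A) (M : Type) [AddCommGroup M]
    [Module A M] where
  deg : ℕ → AddSubgroup M
  internal : DirectSum.IsInternal deg
  smul_mem : ∀ {p d : ℕ} {a : A} {x : M}, a ∈ G.deg p → x ∈ deg d → a • x ∈ deg (p + d)

/-- A resolution of `R` by projective graded left `A`-modules, in which the `n`-th
module is generated by its homogeneous component of degree `n`.  Existence of such a
resolution is the definition of Koszulity. -/
structure KResolution {A : Type} [Ring A] (G : GRing R A) where
  P : ℕ → Type
  [acg : ∀ n, AddCommGroup (P n)]
  [mod : ∀ n, Module A (P n)]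
  proj : ∀ n, Module.Projective A (P n)
  g : ∀ n, ℕ → AddSubgroup (P n)
  internal : ∀ n, DirectSum.IsInternal (g n)
  smul_mem : ∀ (n : ℕ) {p d : ℕ} {a : A} {x : P n},
    a ∈ G.deg p → x ∈ g n d → a • x ∈ g n (p + d)
  f : ∀ n, P (n + 1) →+ P n
  f_linear : ∀ (n : ℕ) (a : A) (x : P (n + 1)), f n (a • x) = a • f n x
  f_graded : ∀ (n d : ℕ), ∀ x ∈ g (n + 1) d, f n x ∈ g n d
  eps : P 0 →+ R
  eps_linear : ∀ (a : A) (x : P 0), eps (a • x) = G.aug a * eps x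
  eps_surj : Function.Surjective eps
  eps_graded : ∀ (d : ℕ), ∀ x ∈ g 0 (d + 1), eps x = 0
  comp0 : ∀ x : P 1, eps (f 0 x) = 0
  exact0 : ∀ x : P 0, eps x = 0 → x ∈ Set.range (f 0)
  comp : ∀ (n : ℕ) (x : P (n + 2)), f n (f (n + 1) x) = 0
  exact : ∀ (n : ℕ) (x : P (n + 1)), f n x = 0 → x ∈ Set.range (f (n + 1))
  gen : ∀ (n : ℕ) (x : P n),
    x ∈ AddSubgroup.closure {z : P n | ∃ (a : A), ∃ y ∈ g n n, z = a • y}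

/-- A connected graded `R`-ring is Koszul if `R` admits a resolution by projective
graded left `A`-modules such that the `n`-th module is generated in degree `n`. -/
def GRing.IsKoszul {A : Type} [Ring A] (G : GRing R A) : Prop :=
  Nonempty (KResolution G)

end GradedRings
--CHUNK_G_END

section DirectSumHelpers

variable {ι : Type} [DecidableEq ι]

/-- Transport of direct sums along an additive map compatible with gradings. -/
def gmap {M N : Type} [AddCommGroup M] [AddCommGroup N]
    (gM : ι → AddSubgroup M) (gN : ι → AddSubgroup N) (f : M →+ N)
    (hf : ∀ i, ∀ x ∈ gM i, f x ∈ gN i) : (⨁ i, gM i) →+ ⨁ i, gN i :=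
  DFinsupp.mapRange.addMonoidHom fun i =>
    ((f.comp (gM i).subtype).codRestrict (gN i) (fun x => hf i x x.2))

@[simp] lemma gmap_apply {M N : Type} [AddCommGroup M] [AddCommGroup N]
    (gM : ι → AddSubgroup M) (gN : ι → AddSubgroup N) (f : M →+ N)
    (hf : ∀ i, ∀ x ∈ gM i, f x ∈ gN i) (w : ⨁ i, gM i) (i : ι) :
    (gmap gM gN f hf w i : N) = f (w i) := rfl

lemma gmap_of {M N : Type} [AddCommGroup M] [AddCommGroup N]
    (gM : ι → AddSubgroup M) (gN : ι → AddSubgroup N) (f : M →+ N)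
    (hf : ∀ i, ∀ x ∈ gM i, f x ∈ gN i) (i : ι) (x : gM i) :
    gmap gM gN f hf (DirectSum.of _ i x) = DirectSum.of _ i ⟨f x, hf i x x.2⟩ := by
  classical
  exact DFinsupp.mapRange_single (f := fun i => _) (hf := fun i => map_zero _)

lemma coe_gmap {M N : Type} [AddCommGroup M] [AddCommGroup N]
    (gM : ι → AddSubgroup M) (gN : ι → AddSubgroup N) (f : M →+ N)
    (hf : ∀ i, ∀ x ∈ gM i, f x ∈ gN i) (w : ⨁ i, gM i) :
    DirectSum.coeAddMonoidHom gN (gmap gM gN f hf w)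
      = f (DirectSum.coeAddMonoidHom gM w) := by
  induction w using DirectSum.induction_on with
  | zero => simp
  | of i x => rw [gmap_of]; simp
  | add x y hx hy => simp [map_add, hx, hy]

lemma isInternal_prod {M N : Type} [AddCommGroup M] [AddCommGroup N]
    {gM : ι → AddSubgroup M} {gN : ι → AddSubgroup N}
    (hM : DirectSum.IsInternal gM) (hN : DirectSum.IsInternal gN) :
    DirectSum.IsInternal (fun i => (gM i).prod (gN i)) := by
  constructor
  · rw [injective_iff_map_eq_zero]
    intro w hw
    have h1 : gmap (fun i => (gM i).prod (gN i)) gM (AddMonoidHom.fst M N)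
        (fun i x hx => show AddMonoidHom.fst M N x ∈ gM i from hx.1) w = 0 :=
      hM.injective (by rw [coe_gmap, hw]; simp)
    have h2 : gmap (fun i => (gM i).prod (gN i)) gN (AddMonoidHom.snd M N)
        (fun i x hx => show AddMonoidHom.snd M N x ∈ gN i from hx.2) w = 0 :=
      hN.injective (by rw [coe_gmap, hw]; simp)
    refine DFinsupp.ext fun i => ?_
    have e1 := congrArg (fun v => ((v i : M))) h1
    have e2 := congrArg (fun v => ((v i : N))) h2
    simp only [gmap_apply] at e1 e2
    have : ((w i : M × N)) = 0 := Prod.ext (by simpa using e1) (by simpa using e2)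
    rw [DFinsupp.zero_apply]
    exact Subtype.ext this
  · intro x
    obtain ⟨u, hu⟩ := hM.surjective x.1
    obtain ⟨v, hv⟩ := hN.surjective x.2
    refine ⟨gmap gM (fun i => (gM i).prod (gN i)) (AddMonoidHom.inl M N)
        (fun i y hy => show AddMonoidHom.inl M N y ∈ (gM i).prod (gN i) from ⟨hy, (gN i).zero_mem⟩) u
      + gmap gN (fun i => (gM i).prod (gN i)) (AddMonoidHom.inr M N)
        (fun i y hy => show AddMonoidHom.inr M N y ∈ (gM i).prod (gN i) from ⟨(gM i).zero_mem, hy⟩) v, ?_⟩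
    rw [map_add, coe_gmap, coe_gmap, hu, hv]
    ext <;> simp

lemma isInternal_comap {P : Type} [AddCommGroup P] {g : ι → AddSubgroup P}
    (hg : DirectSum.IsInternal g) (K : AddSubgroup P) (π : P →+ P)
    (hπK : ∀ x, π x ∈ K) (hfix : ∀ x ∈ K, π x = x)
    (hπg : ∀ i, ∀ x ∈ g i, π x ∈ g i) :
    DirectSum.IsInternal (fun i => (g i).comap K.subtype) := by
  constructor
  · rw [injective_iff_map_eq_zero]
    intro w hw
    have h1 : gmap (fun i => (g i).comap K.subtype) g K.subtype
        (fun i x hx => show K.subtype x ∈ g i from hx) w = 0 :=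
      hg.injective (by rw [coe_gmap, hw]; simp)
    refine DFinsupp.ext fun i => ?_
    have e1 := congrArg (fun v => ((v i : P))) h1
    simp only [gmap_apply] at e1
    rw [DFinsupp.zero_apply]
    exact Subtype.ext (Subtype.ext (by simpa using e1))
  · intro x
    obtain ⟨u, hu⟩ := hg.surjective (x : P)
    refine ⟨gmap g (fun i => (g i).comap K.subtype)
        (π.codRestrict K hπK) (fun i y hy => hπg i y hy) u, ?_⟩
    have := coe_gmap g (fun i => (g i).comap K.subtype)
        (π.codRestrict K hπK) (fun i y hy => hπg i y hy) u
    apply Subtype.ext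
    rw [show ((DirectSum.coeAddMonoidHom fun i => (g i).comap K.subtype) _ : P)
      = (K.subtype) ((DirectSum.coeAddMonoidHom fun i => (g i).comap K.subtype) _) from rfl]
    rw [this, hu]
    exact hfix (x : P) x.2

end DirectSumHelpers

section ProdModule

variable {A B : Type} [Ring A] [Ring B]

section
variable {M N : Type} [AddCommGroup M] [AddCommGroup N] [Module A M] [Module B N]

instance prodSMul : SMul (A × B) (M × N) :=
  ⟨fun ab x => (ab.1 • x.1, ab.2 • x.2)⟩

@[simp] lemma prod_smul_def (ab : A × B) (x : M × N) :
    ab • x = (ab.1 • x.1, ab.2 • x.2) := rfl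

instance prodModule : Module (A × B) (M × N) where
  one_smul x := by ext <;> simp
  mul_smul ab cd x := by ext <;> simp [mul_smul]
  smul_zero ab := by ext <;> simp
  smul_add ab x y := by ext <;> simp
  add_smul ab cd x := by ext <;> simp [add_smul]
  zero_smul x := by ext <;> simp

theorem projective_prod (hA : Module.Projective A M) (hB : Module.Projective B N) :
    Module.Projective (A × B) (M × N) := by
  obtain ⟨sA, hsA⟩ := hA.out
  obtain ⟨sB, hsB⟩ := hB.out
  refine Module.projective_def.mpr ⟨⟨⟨fun x =>
      (sA x.1).sum (fun m a => Finsupp.single ((m, 0) : M × N) ((a, 0) : A × B))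
      + (sB x.2).sum (fun n b => Finsupp.single (((0 : M), n)) (((0 : A), b))), ?_⟩, ?_⟩, ?_⟩
  · intro x y
    simp only [Prod.fst_add, Prod.snd_add, map_add]
    rw [Finsupp.sum_add_index' (fun m => by simp [Prod.mk_zero_zero])
        (fun m a a' => by rw [← Finsupp.single_add, Prod.mk_add_mk, add_zero]),
      Finsupp.sum_add_index' (fun n => by simp [Prod.mk_zero_zero])
        (fun n b b' => by rw [← Finsupp.single_add, Prod.mk_add_mk, add_zero])]
    abel
  · intro ab x
    simp only [prod_smul_def, map_smul, RingHom.id_apply]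
    rw [Finsupp.sum_smul_index (fun m => by simp [Prod.mk_zero_zero]),
      Finsupp.sum_smul_index (fun n => by simp [Prod.mk_zero_zero]),
      smul_add, Finsupp.smul_sum, Finsupp.smul_sum]
    congr 1
    · refine Finsupp.sum_congr fun m _ => ?_
      rw [Finsupp.smul_single]
      congr 1
      ext <;> simp
    · refine Finsupp.sum_congr fun n _ => ?_
      rw [Finsupp.smul_single]
      congr 1
      ext <;> simp
  · intro x
    simp only [LinearMap.coe_mk, AddHom.coe_mk, map_add, map_finsuppSum,
      Finsupp.linearCombination_single, id_eq]
    have h1 : ((sA x.1).sum fun m a => ((a, (0:B)) : A × B) • ((m, (0:N)) : M × N))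
        = ((sA x.1).sum (fun m a => a • m), (0 : N)) := by
      rw [Finsupp.sum, Finsupp.sum, Prod.ext_iff]
      constructor
      · rw [Prod.fst_sum]; simp
      · rw [Prod.snd_sum]; simp
    have h2 : ((sB x.2).sum fun n b => (((0:A), b) : A × B) • (((0:M), n) : M × N))
        = ((0 : M), (sB x.2).sum (fun n b => b • n)) := by
      rw [Finsupp.sum, Finsupp.sum, Prod.ext_iff]
      constructor
      · rw [Prod.fst_sum]; simp
      · rw [Prod.snd_sum]; simp
    rw [h1, h2]
    have eA := hsA x.1
    have eB := hsB x.2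
    rw [Finsupp.linearCombination_apply] at eA eB
    simp only [id_eq] at eA eB
    rw [eA, eB]
    ext <;> simp

end
end ProdModule

section Parts

variable (A B : Type) [Ring A] [Ring B]
variable (P : Type) [AddCommGroup P] [Module (A × B) P]

/-- The subgroup of elements fixed by the central idempotent `(1,0)`. -/
def fstGrp : AddSubgroup P where
  carrier := {x | (((1 : A), (0 : B)) : A × B) • x = x}
  add_mem' := by
    intro a b ha hb
    simp only [Set.mem_setOf_eq] at *
    rw [smul_add, ha, hb]
  zero_mem' := by simp only [Set.mem_setOf_eq, smul_zero]
  neg_mem' := by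
    intro a ha
    simp only [Set.mem_setOf_eq] at *
    rw [smul_neg, ha]

lemma mem_fstGrp {x : P} : x ∈ fstGrp A B P ↔ (((1 : A), (0 : B)) : A × B) • x = x :=
  Iff.rfl

variable {A B P}

instance fstSMul : SMul A (fstGrp A B P) :=
  ⟨fun a x => ⟨((a, (0 : B)) : A × B) • (x : P), by
    rw [mem_fstGrp, smul_smul]
    congr 1
    ext <;> simp⟩⟩

@[simp] lemma fst_smul_coe (a : A) (x : fstGrp A B P) :
    ((a • x : fstGrp A B P) : P) = ((a, (0 : B)) : A × B) • (x : P) := rfl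

instance fstMod : Module A (fstGrp A B P) where
  one_smul x := Subtype.ext x.2
  mul_smul a b x := Subtype.ext (by
    simp only [fst_smul_coe, smul_smul]
    congr 1
    ext <;> simp)
  smul_zero a := Subtype.ext (by simp)
  smul_add a x y := Subtype.ext (by simp [smul_add])
  add_smul a b x := Subtype.ext (by
    simp only [fst_smul_coe]
    rw [show ((a + b, (0:B)) : A × B) = (a, (0:B)) + (b, (0:B)) by ext <;> simp,
      add_smul]
    rfl)
  zero_smul x := Subtype.ext (by
    simp only [fst_smul_coe]
    rw [show ((0, (0:B)) : A × B) = 0 from rfl, zero_smul]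
    rfl)

theorem projective_fst (h : Module.Projective (A × B) P) :
    Module.Projective A (fstGrp A B P) := by
  obtain ⟨s, hs⟩ := h.out
  set e : A × B := ((1 : A), (0 : B)) with he
  have hee : ∀ p : P, e • (e • p) = e • p := by
    intro p
    rw [smul_smul]
    congr 1
    ext <;> simp [he]
  set pr : P → fstGrp A B P := fun p => ⟨e • p, hee p⟩ with hpr
  refine Module.projective_def.mpr ⟨⟨⟨fun x =>
      (s (x : P)).sum (fun p ab => Finsupp.single (pr p) ab.1), ?_⟩, ?_⟩, ?_⟩
  · intro x y
    rw [AddSubgroup.coe_add, map_add]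
    rw [Finsupp.sum_add_index' (fun p => by simp) (fun p a a' => by
      rw [Prod.fst_add, Finsupp.single_add])]
  · intro a x
    simp only [RingHom.id_apply, fst_smul_coe, map_smul]
    rw [Finsupp.sum_smul_index (fun p => by simp)]
    rw [Finsupp.smul_sum]
    refine Finsupp.sum_congr fun p _ => ?_
    rw [Finsupp.smul_single, Prod.fst_mul, smul_eq_mul]
  · intro x
    apply Subtype.ext
    simp only [LinearMap.coe_mk, AddHom.coe_mk, map_finsuppSum,
      Finsupp.linearCombination_single, id_eq]
    rw [show (((((s (x : P)).sum fun p ab => ab.1 • pr p) : fstGrp A B P)) : P)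
        = (s (x : P)).sum (fun p ab => ((ab.1 • pr p : fstGrp A B P) : P)) from
      map_finsuppSum (fstGrp A B P).subtype _ _]
    have : ∀ p (ab : A × B), ((ab.1 • pr p : fstGrp A B P) : P) = e • (ab • p) := by
      intro p ab
      rw [fst_smul_coe, hpr]
      simp only [smul_smul]
      congr 1
      ext <;> simp [he]
    simp only [this]
    rw [← Finsupp.smul_sum]
    have := hs x
    rw [Finsupp.linearCombination_apply] at this
    simp only [id_eq] at this
    rw [this]
    exact x.2

end Parts


section Parts2

variable (A B : Type) [Ring A] [Ring B]
variable (P : Type) [AddCommGroup P] [Module (A × B) P]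

/-- The subgroup of elements fixed by the central idempotent `(0,1)`. -/
def sndGrp : AddSubgroup P where
  carrier := {x | (((0 : A), (1 : B)) : A × B) • x = x}
  add_mem' := by
    intro a b ha hb
    simp only [Set.mem_setOf_eq] at *
    rw [smul_add, ha, hb]
  zero_mem' := by simp only [Set.mem_setOf_eq, smul_zero]
  neg_mem' := by
    intro a ha
    simp only [Set.mem_setOf_eq] at *
    rw [smul_neg, ha]

lemma mem_sndGrp {x : P} : x ∈ sndGrp A B P ↔ (((0 : A), (1 : B)) : A × B) • x = x :=
  Iff.rfl

variable {A B P}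

instance sndSMul : SMul B (sndGrp A B P) :=
  ⟨fun b x => ⟨(((0 : A), b) : A × B) • (x : P), by
    rw [mem_sndGrp, smul_smul]
    congr 1
    ext <;> simp⟩⟩

@[simp] lemma snd_smul_coe (b : B) (x : sndGrp A B P) :
    ((b • x : sndGrp A B P) : P) = (((0 : A), b) : A × B) • (x : P) := rfl

instance sndMod : Module B (sndGrp A B P) where
  one_smul x := Subtype.ext x.2
  mul_smul a b x := Subtype.ext (by
    simp only [snd_smul_coe, smul_smul]
    congr 1
    ext <;> simp)
  smul_zero a := Subtype.ext (by simp)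
  smul_add a x y := Subtype.ext (by simp [smul_add])
  add_smul a b x := Subtype.ext (by
    simp only [snd_smul_coe]
    rw [show (((0:A), a + b) : A × B) = ((0:A), a) + ((0:A), b) by ext <;> simp,
      add_smul]
    rfl)
  zero_smul x := Subtype.ext (by
    simp only [snd_smul_coe]
    rw [show (((0:A), (0:B)) : A × B) = 0 from rfl, zero_smul]
    rfl)

theorem projective_snd (h : Module.Projective (A × B) P) :
    Module.Projective B (sndGrp A B P) := by
  obtain ⟨s, hs⟩ := h.out
  set e : A × B := ((0 : A), (1 : B)) with he
  have hee : ∀ p : P, e • (e • p) = e • p := by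
    intro p
    rw [smul_smul]
    congr 1
    ext <;> simp [he]
  set pr : P → sndGrp A B P := fun p => ⟨e • p, hee p⟩ with hpr
  refine Module.projective_def.mpr ⟨⟨⟨fun x =>
      (s (x : P)).sum (fun p ab => Finsupp.single (pr p) ab.2), ?_⟩, ?_⟩, ?_⟩
  · intro x y
    rw [AddSubgroup.coe_add, map_add]
    rw [Finsupp.sum_add_index' (fun p => by simp) (fun p a a' => by
      rw [Prod.snd_add, Finsupp.single_add])]
  · intro a x
    simp only [RingHom.id_apply, snd_smul_coe, map_smul]
    rw [Finsupp.sum_smul_index (fun p => by simp)]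
    rw [Finsupp.smul_sum]
    refine Finsupp.sum_congr fun p _ => ?_
    rw [Finsupp.smul_single, Prod.snd_mul, smul_eq_mul]
  · intro x
    apply Subtype.ext
    simp only [LinearMap.coe_mk, AddHom.coe_mk, map_finsuppSum,
      Finsupp.linearCombination_single, id_eq]
    rw [show (((((s (x : P)).sum fun p ab => ab.2 • pr p) : sndGrp A B P)) : P)
        = (s (x : P)).sum (fun p ab => ((ab.2 • pr p : sndGrp A B P) : P)) from
      map_finsuppSum (sndGrp A B P).subtype _ _]
    have : ∀ p (ab : A × B), ((ab.2 • pr p : sndGrp A B P) : P) = e • (ab • p) := by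
      intro p ab
      rw [snd_smul_coe, hpr]
      simp only [smul_smul]
      congr 1
      ext <;> simp [he]
    simp only [this]
    rw [← Finsupp.smul_sum]
    have := hs x
    rw [Finsupp.linearCombination_apply] at this
    simp only [id_eq] at this
    rw [this]
    exact x.2

end Parts2

section Constructions

variable {R S A B : Type} [Ring R] [Ring S] [Ring A] [Ring B]
variable {GA : GRing R A} {GB : GRing S B} {GAB : GRing (R × S) (A × B)}

/-- Product of two resolutions. -/
def prodRes
    (h_aug : GAB.aug = RingHom.prodMap GA.aug GB.aug)
    (h_deg : ∀ n, GAB.deg n = (GA.deg n).prod (GB.deg n))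
    (CA : KResolution GA) (CB : KResolution GB) : KResolution GAB :=
  letI : ∀ n, AddCommGroup (CA.P n) := CA.acg
  letI : ∀ n, AddCommGroup (CB.P n) := CB.acg
  letI : ∀ n, Module A (CA.P n) := CA.mod
  letI : ∀ n, Module B (CB.P n) := CB.mod
  { P := fun n => CA.P n × CB.P n
    acg := fun _ => inferInstance
    mod := fun _ => prodModule
    proj := fun n => projective_prod (CA.proj n) (CB.proj n)
    g := fun n d => (CA.g n d).prod (CB.g n d)
    internal := fun n => isInternal_prod (CA.internal n) (CB.internal n)
    smul_mem := fun n {p d} {ab} {x} hab hx => by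
      rw [h_deg] at hab
      exact ⟨CA.smul_mem n hab.1 hx.1, CB.smul_mem n hab.2 hx.2⟩
    f := fun n => (CA.f n).prodMap (CB.f n)
    f_linear := fun n ab x => Prod.ext (CA.f_linear n ab.1 x.1) (CB.f_linear n ab.2 x.2)
    f_graded := fun n d x hx => ⟨CA.f_graded n d x.1 hx.1, CB.f_graded n d x.2 hx.2⟩
    eps := (CA.eps).prodMap CB.eps
    eps_linear := fun ab x => by
      rw [h_aug]
      exact Prod.ext (CA.eps_linear ab.1 x.1) (CB.eps_linear ab.2 x.2)
    eps_surj := fun rs => by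
      obtain ⟨u, hu⟩ := CA.eps_surj rs.1
      obtain ⟨v, hv⟩ := CB.eps_surj rs.2
      exact ⟨(u, v), Prod.ext hu hv⟩
    eps_graded := fun d x hx =>
      Prod.ext (by simpa using CA.eps_graded d x.1 hx.1)
        (by simpa using CB.eps_graded d x.2 hx.2)
    comp0 := fun x => Prod.ext (by simpa using CA.comp0 x.1) (by simpa using CB.comp0 x.2)
    exact0 := fun x hx => by
      rw [Prod.ext_iff] at hx
      obtain ⟨u, hu⟩ := CA.exact0 x.1 (by simpa using hx.1)
      obtain ⟨v, hv⟩ := CB.exact0 x.2 (by simpa using hx.2)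
      exact ⟨(u, v), Prod.ext (by simpa using hu) (by simpa using hv)⟩
    comp := fun n x => Prod.ext (by simpa using CA.comp n x.1) (by simpa using CB.comp n x.2)
    exact := fun n x hx => by
      rw [Prod.ext_iff] at hx
      obtain ⟨u, hu⟩ := CA.exact n x.1 (by simpa using hx.1)
      obtain ⟨v, hv⟩ := CB.exact n x.2 (by simpa using hx.2)
      exact ⟨(u, v), Prod.ext (by simpa using hu) (by simpa using hv)⟩
    gen := fun n x => by
      have hA := CA.gen n x.1
      have hB := CB.gen n x.2
      have h1 : ((x.1, (0 : CB.P n)) : CA.P n × CB.P n) ∈ AddSubgroup.closure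
          {z : CA.P n × CB.P n | ∃ ab : A × B,
            ∃ y ∈ (CA.g n n).prod (CB.g n n), z = ab • y} := by
        have hm := AddSubgroup.mem_map_of_mem (AddMonoidHom.inl (CA.P n) (CB.P n)) hA
        rw [AddMonoidHom.map_closure] at hm
        refine AddSubgroup.closure_mono ?_ hm
        rintro z ⟨w, ⟨a, y, hy, rfl⟩, rfl⟩
        exact ⟨((a, 0) : A × B), (y, 0), ⟨hy, zero_mem _⟩, by simp [Prod.ext_iff]⟩
      have h2 : (((0 : CA.P n), x.2) : CA.P n × CB.P n) ∈ AddSubgroup.closure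
          {z : CA.P n × CB.P n | ∃ ab : A × B,
            ∃ y ∈ (CA.g n n).prod (CB.g n n), z = ab • y} := by
        have hm := AddSubgroup.mem_map_of_mem (AddMonoidHom.inr (CA.P n) (CB.P n)) hB
        rw [AddMonoidHom.map_closure] at hm
        refine AddSubgroup.closure_mono ?_ hm
        rintro z ⟨w, ⟨b, y, hy, rfl⟩, rfl⟩
        exact ⟨(((0 : A), b) : A × B), (0, y), ⟨zero_mem _, hy⟩, by simp [Prod.ext_iff]⟩
      have hx : x = (x.1, (0 : CB.P n)) + ((0 : CA.P n), x.2) := by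
        rw [Prod.ext_iff]; simp
      rw [hx]
      exact add_mem h1 h2 }

end Constructions

section Extract

variable {R S A B : Type} [Ring R] [Ring S] [Ring A] [Ring B]

section
variable {P : Type} [AddCommGroup P] [Module (A × B) P]

/-- Multiplication by the idempotent `(1,0)` as an additive map. -/
def eSmulFst (A B : Type) [Ring A] [Ring B] (P : Type) [AddCommGroup P]
    [Module (A × B) P] : P →+ P where
  toFun x := (((1 : A), (0 : B)) : A × B) • x
  map_zero' := smul_zero _
  map_add' := smul_add _

lemma eSmulFst_mem (x : P) : eSmulFst A B P x ∈ fstGrp A B P := by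
  rw [mem_fstGrp]
  show (((1 : A), (0 : B)) : A × B) • (((1 : A), (0 : B)) : A × B) • x = _
  rw [smul_smul]
  congr 1
  ext <;> simp

lemma eSmulFst_fix : ∀ x ∈ fstGrp A B P, eSmulFst A B P x = x := fun _ hx => hx

/-- Multiplication by the idempotent `(0,1)` as an additive map. -/
def eSmulSnd (A B : Type) [Ring A] [Ring B] (P : Type) [AddCommGroup P]
    [Module (A × B) P] : P →+ P where
  toFun x := (((0 : A), (1 : B)) : A × B) • x
  map_zero' := smul_zero _
  map_add' := smul_add _

lemma eSmulSnd_mem (x : P) : eSmulSnd A B P x ∈ sndGrp A B P := by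
  rw [mem_sndGrp]
  show (((0 : A), (1 : B)) : A × B) • (((0 : A), (1 : B)) : A × B) • x = _
  rw [smul_smul]
  congr 1
  ext <;> simp

lemma eSmulSnd_fix : ∀ x ∈ sndGrp A B P, eSmulSnd A B P x = x := fun _ hx => hx

end

variable {GA : GRing R A} {GB : GRing S B} {GAB : GRing (R × S) (A × B)}

lemma one_zero_mem_deg0 (h_deg : ∀ n, GAB.deg n = (GA.deg n).prod (GB.deg n)) :
    (((1 : A), (0 : B)) : A × B) ∈ GAB.deg 0 := by
  rw [h_deg]
  refine ⟨?_, zero_mem _⟩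
  have := GA.emb_mem 1
  rwa [map_one] at this

lemma zero_one_mem_deg0 (h_deg : ∀ n, GAB.deg n = (GA.deg n).prod (GB.deg n)) :
    (((0 : A), (1 : B)) : A × B) ∈ GAB.deg 0 := by
  rw [h_deg]
  refine ⟨zero_mem _, ?_⟩
  have := GB.emb_mem 1
  rwa [map_one] at this

/-- Extraction of the first-factor resolution. -/
def fstRes
    (h_aug : GAB.aug = RingHom.prodMap GA.aug GB.aug)
    (h_deg : ∀ n, GAB.deg n = (GA.deg n).prod (GB.deg n))
    (C : KResolution GAB) : KResolution GA :=
  letI : ∀ n, AddCommGroup (C.P n) := C.acg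
  letI : ∀ n, Module (A × B) (C.P n) := C.mod
  { P := fun n => fstGrp A B (C.P n)
    acg := fun _ => inferInstance
    mod := fun _ => fstMod
    proj := fun n => projective_fst (C.proj n)
    g := fun n d => (C.g n d).comap (fstGrp A B (C.P n)).subtype
    internal := fun n =>
      isInternal_comap (C.internal n) (fstGrp A B (C.P n)) (eSmulFst A B (C.P n))
        eSmulFst_mem eSmulFst_fix
        (fun i x hx => by
          have := C.smul_mem n (one_zero_mem_deg0 h_deg) hx
          rwa [zero_add] at this)
    smul_mem := fun n {p d} {a} {x} ha hx =>
      C.smul_mem n (by rw [h_deg]; exact ⟨ha, zero_mem _⟩) hx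
    f := fun n => ((C.f n).comp (fstGrp A B (C.P (n+1))).subtype).codRestrict
      (fstGrp A B (C.P n)) (fun x => by
        rw [mem_fstGrp]
        show (((1 : A), (0 : B)) : A × B) • C.f n (x : C.P (n+1)) = _
        rw [← C.f_linear]
        exact congrArg (C.f n) x.2)
    f_linear := fun n a x => Subtype.ext (C.f_linear n ((a, 0) : A × B) (x : C.P (n+1)))
    f_graded := fun n d x hx => C.f_graded n d (x : C.P (n+1)) hx
    eps := (AddMonoidHom.fst R S).comp (C.eps.comp (fstGrp A B (C.P 0)).subtype)
    eps_linear := fun a x => by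
      show (C.eps (((a, (0 : B)) : A × B) • (x : C.P 0))).1 = GA.aug a * (C.eps (x : C.P 0)).1
      rw [C.eps_linear ((a, 0) : A × B) (x : C.P 0), h_aug]
      simp
    eps_surj := fun r => by
      obtain ⟨x, hx⟩ := C.eps_surj ((r, 0) : R × S)
      refine ⟨⟨eSmulFst A B (C.P 0) x, eSmulFst_mem x⟩, ?_⟩
      show (C.eps ((((1 : A), (0 : B)) : A × B) • x)).1 = r
      rw [C.eps_linear, hx, h_aug]
      simp
    eps_graded := fun d x hx => by
      show (C.eps (x : C.P 0)).1 = 0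
      rw [C.eps_graded d (x : C.P 0) hx]
      rfl
    comp0 := fun x => by
      show (C.eps (C.f 0 (x : C.P 1))).1 = 0
      rw [C.comp0]
      rfl
    exact0 := fun x hx => by
      have hfull : C.eps (x : C.P 0) = 0 := by
        have h2 := C.eps_linear (((1 : A), (0 : B)) : A × B) (x : C.P 0)
        rw [x.2, h_aug] at h2
        refine Prod.ext hx ?_
        rw [h2]
        simp
      obtain ⟨y, hy⟩ := C.exact0 (x : C.P 0) hfull
      refine ⟨⟨eSmulFst A B (C.P 1) y, eSmulFst_mem y⟩, Subtype.ext ?_⟩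
      show C.f 0 ((((1 : A), (0 : B)) : A × B) • y) = (x : C.P 0)
      rw [C.f_linear, hy]
      exact x.2
    comp := fun n x => Subtype.ext (C.comp n (x : C.P (n+2)))
    exact := fun n x hx => by
      obtain ⟨y, hy⟩ := C.exact n (x : C.P (n+1)) (congrArg Subtype.val hx)
      refine ⟨⟨eSmulFst A B (C.P (n+2)) y, eSmulFst_mem y⟩, Subtype.ext ?_⟩
      show C.f (n+1) ((((1 : A), (0 : B)) : A × B) • y) = (x : C.P (n+1))
      rw [C.f_linear, hy]
      exact x.2
    gen := fun n x => by
      have hx := C.gen n (x : C.P n)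
      have hm := AddSubgroup.mem_map_of_mem
        ((eSmulFst A B (C.P n)).codRestrict (fstGrp A B (C.P n)) eSmulFst_mem) hx
      rw [AddMonoidHom.map_closure] at hm
      have hφ : (eSmulFst A B (C.P n)).codRestrict (fstGrp A B (C.P n)) eSmulFst_mem
          (x : C.P n) = x := Subtype.ext x.2
      rw [hφ] at hm
      refine AddSubgroup.closure_mono ?_ hm
      rintro z ⟨w, ⟨ab, y, hy, rfl⟩, rfl⟩
      refine ⟨ab.1, ⟨eSmulFst A B (C.P n) y, eSmulFst_mem y⟩, ?_, Subtype.ext ?_⟩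
      · show (((1 : A), (0 : B)) : A × B) • y ∈ C.g n n
        have := C.smul_mem n (one_zero_mem_deg0 h_deg) hy
        rwa [zero_add] at this
      · show (((1 : A), (0 : B)) : A × B) • (ab • y)
          = ((ab.1, (0 : B)) : A × B) • ((((1 : A), (0 : B)) : A × B) • y)
        rw [smul_smul, smul_smul]
        congr 1
        ext <;> simp }

end Extract


section Extract2

variable {R S A B : Type} [Ring R] [Ring S] [Ring A] [Ring B]
variable {GA : GRing R A} {GB : GRing S B} {GAB : GRing (R × S) (A × B)}

/-- Extraction of the second-factor resolution. -/
def sndRes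
    (h_aug : GAB.aug = RingHom.prodMap GA.aug GB.aug)
    (h_deg : ∀ n, GAB.deg n = (GA.deg n).prod (GB.deg n))
    (C : KResolution GAB) : KResolution GB :=
  letI : ∀ n, AddCommGroup (C.P n) := C.acg
  letI : ∀ n, Module (A × B) (C.P n) := C.mod
  { P := fun n => sndGrp A B (C.P n)
    acg := fun _ => inferInstance
    mod := fun _ => sndMod
    proj := fun n => projective_snd (C.proj n)
    g := fun n d => (C.g n d).comap (sndGrp A B (C.P n)).subtype
    internal := fun n =>
      isInternal_comap (C.internal n) (sndGrp A B (C.P n)) (eSmulSnd A B (C.P n))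
        eSmulSnd_mem eSmulSnd_fix
        (fun i x hx => by
          have := C.smul_mem n (zero_one_mem_deg0 h_deg) hx
          rwa [zero_add] at this)
    smul_mem := fun n {p d} {b} {x} hb hx =>
      C.smul_mem n (by rw [h_deg]; exact ⟨zero_mem _, hb⟩) hx
    f := fun n => ((C.f n).comp (sndGrp A B (C.P (n+1))).subtype).codRestrict
      (sndGrp A B (C.P n)) (fun x => by
        rw [mem_sndGrp]
        show (((0 : A), (1 : B)) : A × B) • C.f n (x : C.P (n+1)) = _
        rw [← C.f_linear]
        exact congrArg (C.f n) x.2)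
    f_linear := fun n b x => Subtype.ext (C.f_linear n (((0 : A), b) : A × B) (x : C.P (n+1)))
    f_graded := fun n d x hx => C.f_graded n d (x : C.P (n+1)) hx
    eps := (AddMonoidHom.snd R S).comp (C.eps.comp (sndGrp A B (C.P 0)).subtype)
    eps_linear := fun b x => by
      show (C.eps ((((0 : A), b) : A × B) • (x : C.P 0))).2 = GB.aug b * (C.eps (x : C.P 0)).2
      rw [C.eps_linear (((0 : A), b) : A × B) (x : C.P 0), h_aug]
      simp
    eps_surj := fun r => by
      obtain ⟨x, hx⟩ := C.eps_surj ((0, r) : R × S)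
      refine ⟨⟨eSmulSnd A B (C.P 0) x, eSmulSnd_mem x⟩, ?_⟩
      show (C.eps ((((0 : A), (1 : B)) : A × B) • x)).2 = r
      rw [C.eps_linear, hx, h_aug]
      simp
    eps_graded := fun d x hx => by
      show (C.eps (x : C.P 0)).2 = 0
      rw [C.eps_graded d (x : C.P 0) hx]
      rfl
    comp0 := fun x => by
      show (C.eps (C.f 0 (x : C.P 1))).2 = 0
      rw [C.comp0]
      rfl
    exact0 := fun x hx => by
      have hfull : C.eps (x : C.P 0) = 0 := by
        have h2 := C.eps_linear (((0 : A), (1 : B)) : A × B) (x : C.P 0)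
        rw [x.2, h_aug] at h2
        refine Prod.ext ?_ hx
        rw [h2]
        simp
      obtain ⟨y, hy⟩ := C.exact0 (x : C.P 0) hfull
      refine ⟨⟨eSmulSnd A B (C.P 1) y, eSmulSnd_mem y⟩, Subtype.ext ?_⟩
      show C.f 0 ((((0 : A), (1 : B)) : A × B) • y) = (x : C.P 0)
      rw [C.f_linear, hy]
      exact x.2
    comp := fun n x => Subtype.ext (C.comp n (x : C.P (n+2)))
    exact := fun n x hx => by
      obtain ⟨y, hy⟩ := C.exact n (x : C.P (n+1)) (congrArg Subtype.val hx)
      refine ⟨⟨eSmulSnd A B (C.P (n+2)) y, eSmulSnd_mem y⟩, Subtype.ext ?_⟩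
      show C.f (n+1) ((((0 : A), (1 : B)) : A × B) • y) = (x : C.P (n+1))
      rw [C.f_linear, hy]
      exact x.2
    gen := fun n x => by
      have hx := C.gen n (x : C.P n)
      have hm := AddSubgroup.mem_map_of_mem
        ((eSmulSnd A B (C.P n)).codRestrict (sndGrp A B (C.P n)) eSmulSnd_mem) hx
      rw [AddMonoidHom.map_closure] at hm
      have hφ : (eSmulSnd A B (C.P n)).codRestrict (sndGrp A B (C.P n)) eSmulSnd_mem
          (x : C.P n) = x := Subtype.ext x.2
      rw [hφ] at hm
      refine AddSubgroup.closure_mono ?_ hm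
      rintro z ⟨w, ⟨ab, y, hy, rfl⟩, rfl⟩
      refine ⟨ab.2, ⟨eSmulSnd A B (C.P n) y, eSmulSnd_mem y⟩, ?_, Subtype.ext ?_⟩
      · show (((0 : A), (1 : B)) : A × B) • y ∈ C.g n n
        have := C.smul_mem n (zero_one_mem_deg0 h_deg) hy
        rwa [zero_add] at this
      · show (((0 : A), (1 : B)) : A × B) • (ab • y)
          = (((0 : A), ab.2) : A × B) • ((((0 : A), (1 : B)) : A × B) • y)
        rw [smul_smul, smul_smul]
        congr 1
        ext <;> simp }

end Extract2


/-- Let `R` and `S` be semisimple rings, `A` a connected graded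
`R`-ring and `B` a connected graded `S`-ring.  Then the connected graded
`R × S`-ring `A × B` (with components `(A × B)_n = A_n × B_n`) is Koszul if and
only if both `A` and `B` are Koszul. -/
theorem product_koszul_iff
    (R S : Type) [Ring R] [Ring S]
    (hR : IsSemisimpleRing R) (hS : IsSemisimpleRing S)
    (A B : Type) [Ring A] [Ring B]
    (GA : GRing R A) (GB : GRing S B) (GAB : GRing (R × S) (A × B))
    (h_emb : GAB.emb = RingHom.prodMap GA.emb GB.emb)
    (h_aug : GAB.aug = RingHom.prodMap GA.aug GB.aug)
    (h_deg : ∀ n, GAB.deg n = (GA.deg n).prod (GB.deg n)) :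
    GAB.IsKoszul ↔ GA.IsKoszul ∧ GB.IsKoszul := by
  constructor
  · rintro ⟨C⟩
    exact ⟨⟨fstRes h_aug h_deg C⟩, ⟨sndRes h_aug h_deg C⟩⟩
  · rintro ⟨⟨CA⟩, ⟨CB⟩⟩
    exact ⟨prodRes h_aug h_deg CA CB⟩
end P1605
end
end

section
/- Let k be a field, P a finite graded poset, t ∈ P a maximal element, Q = P \ {t} and B = k^a[Q]. Let u, v be two distinct predecessors of t and s a common predecessor of u and v. Then s = inf{u,v} in Q if and only if Be_{u,t} ∩ Be_{v,t} = Be_{s,t} as subspaces of the incidence algebra of P. -/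
noncomputable section
open MulOpposite
open scoped DirectSum

namespace P1605

--CHUNK_G_END

--CHUNK_P_BEGIN
section Posets

variable (k : Type) [Field k] (P : Type) [PartialOrder P]

/-- `ρ` is a length function for the graded poset `P`: every interval `[x, y]`
contains a maximal chain (a saturated chain for the covering relation `⋖`), and
every maximal chain from `x` to `y` has the same length `ρ x y`. -/
structure LengthFn {P : Type} [PartialOrder P] (ρ : P → P → ℕ) : Prop where
  exists_chain : ∀ x y : P, x ≤ y → ∃ c : List P,
    c.Chain' (· ⋖ ·) ∧ c.head? = some x ∧ c.getLast? = some y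
  chain_length : ∀ (x y : P) (c : List P),
    c.Chain' (· ⋖ ·) → c.head? = some x → c.getLast? = some y →
    c.length = ρ x y + 1

/-- `A`, together with the family `e`, is (a copy of) the incidence algebra of the
finite poset `P` over the field `k`: the elements `e x y`, for `x ≤ y`, form a
`k`-basis of `A` and multiply by `e x y * e z w = δ_{y z} · e x w`; the identity
is `∑ₓ e x x`. -/
structure IncAlg [Fintype P] [DecidableEq P] (A : Type) [Ring A] [Algebra k A] where
  e : P → P → A
  e_not_le : ∀ x y : P, ¬ x ≤ y → e x y = 0
  e_mul : ∀ x y z w : P, x ≤ y → z ≤ w →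
    e x y * e z w = if y = z then e x w else 0
  indep : LinearIndependent k (fun p : {p : P × P // p.1 ≤ p.2} => e p.1.1 p.1.2)
  span_top : Submodule.span k
    (Set.range (fun p : {p : P × P // p.1 ≤ p.2} => e p.1.1 p.1.2)) = ⊤
  one_def : (1 : A) = ∑ x : P, e x x

variable {k P}

/-- The canonical structure of connected graded `R`-ring (`R = k^P`) on the
incidence algebra of a finite graded poset: `e x y` is homogeneous of degree
`l([x,y]) = ρ x y`, the degree-zero part is `R` embedded diagonally, and the
augmentation kills all `e x y` with `x ≠ y`. -/
structure IncGrading [Fintype P] [DecidableEq P] {A : Type} [Ring A] [Algebra k A]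
    (inc : IncAlg k P A) (ρ : P → P → ℕ) (G : GRing (P → k) A) : Prop where
  emb_eq : ∀ f : P → k, G.emb f = ∑ x : P, f x • inc.e x x
  deg_eq : ∀ d : ℕ, (G.deg d : Set A) =
    ↑(Submodule.span k {a : A | ∃ x y : P, x ≤ y ∧ ρ x y = d ∧ a = inc.e x y})
  aug_eq : ∀ x y : P, x ≤ y →
    G.aug (inc.e x y) = if x = y then Pi.single x (1 : k) else 0

end Posets
--CHUNK_P_END


/-- Let `P` be a finite graded poset, `t` a maximal element,
`u ≠ v` two predecessors of `t` and `s` a common predecessor of `u` and `v`.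
Then `s = inf {u, v}` in `Q = P \ {t}` if and only if
`B·e_{u,t} ∩ B·e_{v,t} = B·e_{s,t}` inside the incidence algebra of `P`. -/
theorem inf_iff_intersection
    (k : Type) [Field k] (P : Type) [PartialOrder P] [Fintype P] [DecidableEq P]
    (ρ : P → P → ℕ) (hρ : LengthFn ρ)
    (A : Type) [Ring A] [Algebra k A] (inc : IncAlg k P A)
    (t : P) (ht : ∀ x : P, t ≤ x → x = t)
    (u v : P) (hu : u ⋖ t) (hv : v ⋖ t) (huv : u ≠ v)
    (s : P) (hsu : s ⋖ u) (hsv : s ⋖ v) :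
    (∀ x : P, x ≤ u → x ≤ v → x ≤ s) ↔
      Submodule.span k {a : A | ∃ x : P, x ≤ u ∧ a = inc.e x t} ⊓
        Submodule.span k {a : A | ∃ x : P, x ≤ v ∧ a = inc.e x t}
      = Submodule.span k {a : A | ∃ x : P, x ≤ s ∧ a = inc.e x t} := by

  classical
  set ι := {p : P × P // p.1 ≤ p.2}
  let b : Module.Basis ι k A := Module.Basis.mk inc.indep (by rw [inc.span_top])
  have hb : ∀ p : ι, b p = inc.e p.1.1 p.1.2 := fun p => Module.Basis.mk_apply _ _ p
  have hut : u ≤ t := hu.le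
  have hvt : v ≤ t := hv.le
  have hst : s ≤ t := le_trans hsu.le hut
  have key : ∀ (w : P), w ≤ t →
      Submodule.span k {a : A | ∃ x : P, x ≤ w ∧ a = inc.e x t}
        = Submodule.span k (b '' {p : ι | p.1.2 = t ∧ p.1.1 ≤ w}) := by
    intro w hw
    congr 1
    ext a
    constructor
    · rintro ⟨x, hx, rfl⟩
      exact ⟨⟨(x, t), le_trans hx hw⟩, ⟨rfl, hx⟩, hb _⟩
    · rintro ⟨⟨⟨x, y⟩, hxy⟩, ⟨hy, hx⟩, rfl⟩
      dsimp at hy hx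
      subst hy
      exact ⟨x, hx, hb _⟩
  rw [key u hut, key v hvt, key s hst]
  constructor
  · intro h
    have hset : {p : ι | p.1.2 = t ∧ p.1.1 ≤ u} ∩ {p : ι | p.1.2 = t ∧ p.1.1 ≤ v}
        = {p : ι | p.1.2 = t ∧ p.1.1 ≤ s} := by
      ext p
      constructor
      · rintro ⟨⟨h1, h2⟩, ⟨h3, h4⟩⟩
        exact ⟨h1, h p.1.1 h2 h4⟩
      · rintro ⟨h1, h2⟩
        exact ⟨⟨h1, le_trans h2 hsu.le⟩, ⟨h1, le_trans h2 hsv.le⟩⟩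
    ext a
    simp only [Submodule.mem_inf, Module.Basis.mem_span_image, ← hset, Set.subset_inter_iff]
  · intro h x hxu hxv
    have hxt : x ≤ t := le_trans hxu hut
    have hmem : b ⟨(x, t), hxt⟩ ∈
        Submodule.span k (b '' {p : ι | p.1.2 = t ∧ p.1.1 ≤ u}) ⊓
          Submodule.span k (b '' {p : ι | p.1.2 = t ∧ p.1.1 ≤ v}) :=
      ⟨b.self_mem_span_image.2 ⟨rfl, hxu⟩, b.self_mem_span_image.2 ⟨rfl, hxv⟩⟩
    rw [h] at hmem
    exact (b.self_mem_span_image.1 hmem).2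


end P1605
end
end

section
/- Let k be a field, P a finite graded poset, t ∈ P a maximal element, Q = P \ {t}, B = k^a[Q], and F the set of predecessors of t. Assume |F| ≥ 2 and that there exists a common predecessor s of all elements of F such that s = inf{u,v} for every pair of distinct elements u, v ∈ F. Then for every u ∈ F and with F' = F \ {u}, one has Be_{u,t} ∩ (Σ_{x∈F'} Be_{x,t}) = Be_{s,t}. -/
noncomputable section
open MulOpposite
open scoped DirectSum

namespace P1605

--CHUNK_P_END


private lemma span_inter {k M ι : Type*} [Field k] [AddCommGroup M] [Module k M]
    {f : ι → M} (li : LinearIndependent k f) (S T : Set ι) :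
    Submodule.span k (f '' S) ⊓ Submodule.span k (f '' T)
      = Submodule.span k (f '' (S ∩ T)) := by
  apply le_antisymm
  · rintro z ⟨hz1, hz2⟩
    simp only [SetLike.mem_coe, Finsupp.mem_span_image_iff_linearCombination] at hz1 hz2
    obtain ⟨c, hc, rfl⟩ := hz1
    obtain ⟨d, hd, hcd⟩ := hz2
    have : d = c := li hcd
    subst this
    exact (Finsupp.mem_span_image_iff_linearCombination k).2
      ⟨d, fun i hi => ⟨hc hi, hd hi⟩, rfl⟩
  · exact le_inf (Submodule.span_mono (Set.image_mono Set.inter_subset_left))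
      (Submodule.span_mono (Set.image_mono Set.inter_subset_right))

/-- Let `P` be a finite graded poset, `t` a maximal element and
`F` the set of predecessors of `t`, with `|F| ≥ 2`.  Assume there is a common
predecessor `s` of all elements of `F` which is the infimum of every pair of
distinct elements of `F`.  Then for every `u ∈ F`, with `F' = F \ {u}`, one has
`B·e_{u,t} ∩ (∑_{x ∈ F'} B·e_{x,t}) = B·e_{s,t}`. -/
theorem intersection_with_sum
    (k : Type) [Field k] (P : Type) [PartialOrder P] [Fintype P] [DecidableEq P]
    (ρ : P → P → ℕ) (hρ : LengthFn ρ)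
    (A : Type) [Ring A] [Algebra k A] (inc : IncAlg k P A)
    (t : P) (ht : ∀ x : P, t ≤ x → x = t)
    (hcard : ∃ u v : P, u ⋖ t ∧ v ⋖ t ∧ u ≠ v)
    (s : P) (hs : ∀ w : P, w ⋖ t → s ⋖ w)
    (hinf : ∀ w w' : P, w ⋖ t → w' ⋖ t → w ≠ w' → ∀ x : P, x ≤ w → x ≤ w' → x ≤ s)
    (u : P) (hu : u ⋖ t) :
    Submodule.span k {a : A | ∃ x : P, x ≤ u ∧ a = inc.e x t} ⊓
      Submodule.span k {a : A | ∃ w : P, w ⋖ t ∧ w ≠ u ∧ ∃ x : P, x ≤ w ∧ a = inc.e x t}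
    = Submodule.span k {a : A | ∃ x : P, x ≤ s ∧ a = inc.e x t} := by
  set f : {p : P × P // p.1 ≤ p.2} → A := fun p => inc.e p.1.1 p.1.2 with hf
  -- pick some w₀ ⋖ t with w₀ ≠ u
  obtain ⟨a, b, ha, hb, hab⟩ := hcard
  obtain ⟨w₀, hw₀, hw₀u⟩ : ∃ w₀, w₀ ⋖ t ∧ w₀ ≠ u := by
    by_cases h : a = u
    · exact ⟨b, hb, fun hbu => hab (h.trans hbu.symm)⟩
    · exact ⟨a, ha, h⟩
  have hsu : s ≤ u := (hs u hu).le
  have h1 : {a : A | ∃ x : P, x ≤ u ∧ a = inc.e x t}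
      = f '' {p | p.1.2 = t ∧ p.1.1 ≤ u} := by
    ext z
    constructor
    · rintro ⟨x, hx, rfl⟩
      exact ⟨⟨⟨x, t⟩, hx.trans hu.le⟩, ⟨rfl, hx⟩, rfl⟩
    · rintro ⟨⟨⟨x, y⟩, hxy⟩, ⟨hy, hx⟩, rfl⟩
      exact ⟨x, hx, by cases hy; rfl⟩
  have h2 : {a : A | ∃ w : P, w ⋖ t ∧ w ≠ u ∧ ∃ x : P, x ≤ w ∧ a = inc.e x t}
      = f '' {p | p.1.2 = t ∧ ∃ w, w ⋖ t ∧ w ≠ u ∧ p.1.1 ≤ w} := by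
    ext z
    constructor
    · rintro ⟨w, hw, hwu, x, hx, rfl⟩
      exact ⟨⟨⟨x, t⟩, hx.trans hw.le⟩, ⟨rfl, w, hw, hwu, hx⟩, rfl⟩
    · rintro ⟨⟨⟨x, y⟩, hxy⟩, ⟨hy, w, hw, hwu, hx⟩, rfl⟩
      exact ⟨w, hw, hwu, x, hx, by cases hy; rfl⟩
  have h3 : {a : A | ∃ x : P, x ≤ s ∧ a = inc.e x t}
      = f '' {p | p.1.2 = t ∧ p.1.1 ≤ s} := by
    ext z
    constructor
    · rintro ⟨x, hx, rfl⟩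
      exact ⟨⟨⟨x, t⟩, (hx.trans hsu).trans hu.le⟩, ⟨rfl, hx⟩, rfl⟩
    · rintro ⟨⟨⟨x, y⟩, hxy⟩, ⟨hy, hx⟩, rfl⟩
      exact ⟨x, hx, by cases hy; rfl⟩
  have hsets : {p : {p : P × P // p.1 ≤ p.2} | p.1.2 = t ∧ p.1.1 ≤ u} ∩
      {p | p.1.2 = t ∧ ∃ w, w ⋖ t ∧ w ≠ u ∧ p.1.1 ≤ w}
      = {p | p.1.2 = t ∧ p.1.1 ≤ s} := by
    ext ⟨⟨x, y⟩, hxy⟩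
    simp only [Set.mem_inter_iff, Set.mem_setOf_eq]
    constructor
    · rintro ⟨⟨rfl, hxu⟩, ⟨-, w, hw, hwu, hxw⟩⟩
      exact ⟨rfl, hinf u w hu hw (Ne.symm hwu) x hxu hxw⟩
    · rintro ⟨rfl, hxs⟩
      exact ⟨⟨rfl, hxs.trans hsu⟩, rfl, w₀, hw₀, hw₀u, hxs.trans (hs w₀ hw₀).le⟩
  rw [h1, h2, h3, span_inter inc.indep, hsets]

end P1605
end
end
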